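/- arXiv:2009.08662 — 7 statements merged into one kernel-verified Lean document; each statement's English description precedes it below -/
import Mathlib

section
/- Let V : ℝⁿ × ℝⁿ → ℝ be twice continuously differentiable and suppose there are constants a₂ ≥ a₁ > 0 with a₁‖x − ξ‖² ≤ V(x, ξ) ≤ a₂‖x − ξ‖² for all x, ξ ∈ ℝⁿ. Then for every x ∈ ℝⁿ: (i) V(x, x) = 0; (ii) the first partial derivatives vanish on the diagonal, D₁V(x,x) = 0 and D₂V(x,x) = 0; (iii) the matrix M(x) := D²₂₂V(x,x) (the second derivative of ξ ↦ V(x,ξ) at ξ = x) satisfies 2a₁‖v‖² ≤ vᵀ M(x) v ≤ 2a₂‖v‖² for all v ∈ ℝⁿ; and (iv) the mixed second partial derivative satisfies D²₁₂V(x,x) = −M(x), i.e. for all v, w ∈ ℝⁿ, D²₁₂V(x,x)[w, v] = −wᵀ M(x) v. -/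
/- STATEMENT 2: properties on the diagonal of a function V squeezed between
quadratic forms: V(x,x) = 0, vanishing first derivatives, bounds on the second
derivative matrix M(x) = D²₂₂V(x,x), and the mixed derivative D²₁₂V(x,x) = −M(x). -/

open Set Matrix

lemma quad_lower {g : ℝ → ℝ} (hg : ContDiff ℝ 2 g) (c : ℝ)
    (h0 : g 0 = 0) (h1 : deriv g 0 = 0) (hle : ∀ t, c * t ^ 2 ≤ g t) :
    2 * c ≤ deriv (deriv g) 0 := by
  have hdiff : Differentiable ℝ g := hg.differentiable (by norm_num)
  have hg' : ContDiff ℝ 1 (deriv g) := by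
    rw [show (2 : WithTop ℕ∞) = 1 + 1 from rfl, contDiff_succ_iff_deriv] at hg
    exact hg.2.2
  have hdiff' : Differentiable ℝ (deriv g) := hg'.differentiable (by norm_num)
  have hcont : Continuous (deriv (deriv g)) := hg'.continuous_deriv le_rfl
  refine le_of_forall_pos_le_add fun ε hε => ?_
  have hc := hcont.continuousAt (x := 0)
  rw [Metric.continuousAt_iff] at hc
  obtain ⟨δ, hδ, hball⟩ := hc ε hε
  set t := δ / 2 with htdef
  have ht : (0:ℝ) < t := by positivity
  have hfC : ContDiffOn ℝ 1 g (Icc 0 t) := hg.contDiffOn.of_le (by norm_num)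
  have hIccN : ∀ s ∈ Ioo (0:ℝ) t, Icc (0:ℝ) t ∈ nhds s := fun s hs =>
    Icc_mem_nhds hs.1 hs.2
  have hone : ∀ s ∈ Ioo (0:ℝ) t, iteratedDerivWithin 1 g (Icc 0 t) s = deriv g s := by
    intro s hs
    rw [iteratedDerivWithin_eq_iteratedFDerivWithin,
      ← Set.univ_inter (Icc (0:ℝ) t), iteratedFDerivWithin_inter (hIccN s hs),
      iteratedFDerivWithin_univ, ← iteratedDeriv_eq_iteratedFDeriv, iteratedDeriv_one]
  have htwo : ∀ s ∈ Ioo (0:ℝ) t, iteratedDerivWithin 2 g (Icc 0 t) s = deriv (deriv g) s := by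
    intro s hs
    rw [iteratedDerivWithin_eq_iteratedFDerivWithin,
      ← Set.univ_inter (Icc (0:ℝ) t), iteratedFDerivWithin_inter (hIccN s hs),
      iteratedFDerivWithin_univ, ← iteratedDeriv_eq_iteratedFDeriv,
      iteratedDeriv_succ, iteratedDeriv_one]
  have hf' : DifferentiableOn ℝ (iteratedDerivWithin 1 g (Icc 0 t)) (Ioo 0 t) :=
    (hdiff'.differentiableOn).congr hone
  obtain ⟨s, hs, htaylor⟩ := taylor_mean_remainder_lagrange (n := 1) ht.ne (by rwa [uIcc_of_le ht.le]) (by rwa [uIcc_of_le ht.le, uIoo_of_lt ht])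
  rw [uIoo_of_lt ht] at hs
  rw [uIcc_of_le ht.le] at htaylor
  rw [htwo s hs] at htaylor
  have hP : taylorWithinEval g 1 (Icc 0 t) 0 t = 0 := by
    rw [taylor_within_apply]
    have : iteratedDerivWithin 1 g (Icc 0 t) 0 = deriv g 0 := by
      rw [iteratedDerivWithin_one]
      exact (hdiff 0).derivWithin ((uniqueDiffOn_Icc ht) 0 (by simp [ht.le]))
    simp [Finset.sum_range_succ, this, h1, h0]
  rw [hP, sub_zero] at htaylor
  have key : c * t ^ 2 ≤ deriv (deriv g) s * t ^ 2 / 2 := by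
    have h := hle t
    rw [htaylor] at h
    norm_num [Nat.factorial] at h ⊢
    linarith
  have h2 : 2 * c ≤ deriv (deriv g) s := by
    nlinarith [key, pow_pos ht 2]
  have hnear : deriv (deriv g) s < deriv (deriv g) 0 + ε := by
    have := hball (x := s) (by
      rw [Real.dist_eq, sub_zero, abs_of_pos hs.1]
      calc s < t := hs.2
        _ < δ := by rw [htdef]; linarith)
    rw [Real.dist_eq] at this
    have := abs_lt.mp this
    linarith [this.1, this.2]
  linarith


/-- Second derivative of `ξ ↦ V x ξ` evaluated at `ξ = x`, as a matrix. -/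
noncomputable def hess2 {n : ℕ} (V : (Fin n → ℝ) → (Fin n → ℝ) → ℝ) (x : Fin n → ℝ) :
    Matrix (Fin n) (Fin n) ℝ :=
  Matrix.of fun i j => fderiv ℝ (fun ξ => fderiv ℝ (V x) ξ (Pi.single j 1)) x (Pi.single i 1)

theorem stmt2 {n : ℕ}
    (V : (Fin n → ℝ) → (Fin n → ℝ) → ℝ)
    (hV : ContDiff ℝ 2 (fun p : (Fin n → ℝ) × (Fin n → ℝ) => V p.1 p.2))
    (a₁ a₂ : ℝ) (ha₁ : 0 < a₁) (ha₁₂ : a₁ ≤ a₂)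
    (hVlow : ∀ x ξ, a₁ * ((x - ξ) ⬝ᵥ (x - ξ)) ≤ V x ξ)
    (hVup : ∀ x ξ, V x ξ ≤ a₂ * ((x - ξ) ⬝ᵥ (x - ξ))) :
    ∀ x : Fin n → ℝ,
      -- (i)
      V x x = 0 ∧
      -- (ii)
      fderiv ℝ (fun y => V y x) x = 0 ∧ fderiv ℝ (V x) x = 0 ∧
      -- (iii)
      (∀ v : Fin n → ℝ, 2 * a₁ * (v ⬝ᵥ v) ≤ v ⬝ᵥ (hess2 V x *ᵥ v) ∧
          v ⬝ᵥ (hess2 V x *ᵥ v) ≤ 2 * a₂ * (v ⬝ᵥ v)) ∧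
      -- (iv) mixed second derivative D²₁₂V(x,x)[w,v] = −wᵀ M(x) v
      (∀ v w : Fin n → ℝ,
        fderiv ℝ (fun y => fderiv ℝ (V y) x v) x w = -(w ⬝ᵥ (hess2 V x *ᵥ v))) := by
  have hFd : Differentiable ℝ (fun p : (Fin n → ℝ) × (Fin n → ℝ) => V p.1 p.2) := hV.differentiable (by norm_num)
  have hDF : ContDiff ℝ 1 (fderiv ℝ (fun p : (Fin n → ℝ) × (Fin n → ℝ) => V p.1 p.2)) := hV.fderiv_right (by norm_num)
  have hDFd : Differentiable ℝ (fderiv ℝ (fun p : (Fin n → ℝ) × (Fin n → ℝ) => V p.1 p.2)) := hDF.differentiable (by norm_num)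
  have dotnn : ∀ u : Fin n → ℝ, 0 ≤ u ⬝ᵥ u := fun u =>
    Finset.sum_nonneg fun i _ => mul_self_nonneg _
  have hVxx : ∀ y, V y y = 0 := fun y =>
    le_antisymm (by simpa using hVup y y) (by simpa using hVlow y y)
  have hD2 : ∀ y, fderiv ℝ (V y) y = 0 := by
    intro y
    apply IsLocalMin.fderiv_eq_zero
    exact Filter.Eventually.of_forall fun ξ => by
      show V y y ≤ V y ξ
      rw [hVxx y]; exact le_trans (mul_nonneg ha₁.le (dotnn _)) (hVlow y ξ)
  have hD1 : ∀ y, fderiv ℝ (fun z => V z y) y = 0 := by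
    intro y
    apply IsLocalMin.fderiv_eq_zero
    exact Filter.Eventually.of_forall fun z => by
      show V y y ≤ V z y
      rw [hVxx y]; exact le_trans (mul_nonneg ha₁.le (dotnn _)) (hVlow z y)
  have hslice : ∀ y ξ : Fin n → ℝ, HasFDerivAt (V y)
      ((fderiv ℝ (fun p : (Fin n → ℝ) × (Fin n → ℝ) => V p.1 p.2) (y, ξ)).comp
        (ContinuousLinearMap.inr ℝ (Fin n → ℝ) (Fin n → ℝ))) ξ := fun y ξ =>
    (hFd (y, ξ)).hasFDerivAt.comp ξ (hasFDerivAt_prodMk_right y ξ)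
  have eq1 : ∀ y ξ v : Fin n → ℝ,
      fderiv ℝ (V y) ξ v = fderiv ℝ (fun p : (Fin n → ℝ) × (Fin n → ℝ) => V p.1 p.2) (y, ξ) (0, v) := by
    intro y ξ v
    rw [(hslice y ξ).fderiv]
    rfl
  intro x
  have hD2x : HasFDerivAt (fderiv ℝ (fun p : (Fin n → ℝ) × (Fin n → ℝ) => V p.1 p.2)) (fderiv ℝ (fderiv ℝ (fun p : (Fin n → ℝ) × (Fin n → ℝ) => V p.1 p.2)) (x, x)) (x, x) :=
    (hDFd (x, x)).hasFDerivAt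
  -- derivative of ξ ↦ DF (x, ξ) (0, v) at x
  have hΨ : ∀ v w : Fin n → ℝ,
      fderiv ℝ (fun ξ => fderiv ℝ (fun p : (Fin n → ℝ) × (Fin n → ℝ) => V p.1 p.2) (x, ξ) (0, v)) x w
        = fderiv ℝ (fderiv ℝ (fun p : (Fin n → ℝ) × (Fin n → ℝ) => V p.1 p.2)) (x, x) (0, w) (0, v) := by
    intro v w
    have h3 : HasFDerivAt (fun ξ : Fin n → ℝ => fderiv ℝ (fun p : (Fin n → ℝ) × (Fin n → ℝ) => V p.1 p.2) (x, ξ))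
        ((fderiv ℝ (fderiv ℝ (fun p : (Fin n → ℝ) × (Fin n → ℝ) => V p.1 p.2)) (x, x)).comp
          (ContinuousLinearMap.inr ℝ (Fin n → ℝ) (Fin n → ℝ))) x :=
      hD2x.comp x (hasFDerivAt_prodMk_right x x)
    have h4 := h3.clm_apply (hasFDerivAt_const ((0 : Fin n → ℝ), v) x)
    rw [h4.fderiv]
    simp
  have hMent : ∀ i j, hess2 V x i j
      = fderiv ℝ (fderiv ℝ (fun p : (Fin n → ℝ) × (Fin n → ℝ) => V p.1 p.2)) (x, x) (0, Pi.single i 1) (0, Pi.single j 1) := by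
    intro i j
    show fderiv ℝ (fun ξ => fderiv ℝ (V x) ξ (Pi.single j 1)) x (Pi.single i 1) = _
    have hfun : (fun ξ => fderiv ℝ (V x) ξ (Pi.single j 1))
        = fun ξ => fderiv ℝ (fun p : (Fin n → ℝ) × (Fin n → ℝ) => V p.1 p.2) (x, ξ) (0, Pi.single j 1) := funext fun ξ => eq1 x ξ _
    rw [hfun, hΨ]
  have hbasis : ∀ i : Fin n, (fun j => if i = j then (1:ℝ) else 0) = Pi.single i 1 := by
    intro i; funext j; simp [Pi.single_apply, eq_comm]
  have step1 : ∀ (S : (Fin n → ℝ) →L[ℝ] ℝ) (u : Fin n → ℝ),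
      S u = ∑ i, u i * S (Pi.single i 1) := by
    intro S u
    have h := LinearMap.pi_apply_eq_sum_univ (S : (Fin n → ℝ) →ₗ[ℝ] ℝ) u
    simp only [ContinuousLinearMap.coe_coe, smul_eq_mul] at h
    rw [h]
    exact Finset.sum_congr rfl fun i _ => by rw [hbasis i]
  have hMB : ∀ w v : Fin n → ℝ, w ⬝ᵥ (hess2 V x *ᵥ v)
      = fderiv ℝ (fderiv ℝ (fun p : (Fin n → ℝ) × (Fin n → ℝ) => V p.1 p.2)) (x, x) (0, w) (0, v) := by
    intro w v
    have houter : fderiv ℝ (fderiv ℝ (fun p : (Fin n → ℝ) × (Fin n → ℝ) => V p.1 p.2)) (x, x) (0, w) (0, v)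
        = ∑ i, w i * fderiv ℝ (fderiv ℝ (fun p : (Fin n → ℝ) × (Fin n → ℝ) => V p.1 p.2)) (x, x) (0, Pi.single i 1) (0, v) := by
      have := step1 ((ContinuousLinearMap.apply ℝ ℝ ((0 : Fin n → ℝ), v)).comp
        ((fderiv ℝ (fderiv ℝ (fun p : (Fin n → ℝ) × (Fin n → ℝ) => V p.1 p.2)) (x, x)).comp
          (ContinuousLinearMap.inr ℝ (Fin n → ℝ) (Fin n → ℝ)))) w
      simpa using this
    have hinner : ∀ i, fderiv ℝ (fderiv ℝ (fun p : (Fin n → ℝ) × (Fin n → ℝ) => V p.1 p.2)) (x, x) (0, Pi.single i 1) (0, v)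
        = ∑ j, v j * fderiv ℝ (fderiv ℝ (fun p : (Fin n → ℝ) × (Fin n → ℝ) => V p.1 p.2)) (x, x) (0, Pi.single i 1) (0, Pi.single j 1) := by
      intro i
      have := step1 ((fderiv ℝ (fderiv ℝ (fun p : (Fin n → ℝ) × (Fin n → ℝ) => V p.1 p.2)) (x, x) (0, Pi.single i 1)).comp
        (ContinuousLinearMap.inr ℝ (Fin n → ℝ) (Fin n → ℝ))) v
      simpa using this
    have hL : w ⬝ᵥ (hess2 V x *ᵥ v) = ∑ i, w i * ∑ j, hess2 V x i j * v j := rfl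
    rw [hL, houter]
    refine Finset.sum_congr rfl fun i _ => ?_
    rw [hinner i, Finset.mul_sum, Finset.mul_sum]
    refine Finset.sum_congr rfl fun j _ => ?_
    rw [hMent i j]
    ring
  refine ⟨hVxx x, hD1 x, hD2 x, ?_, ?_⟩
  · -- (iii)
    intro v
    have hγ : ∀ t : ℝ, HasDerivAt (fun t : ℝ => (x, x + t • v)) ((0 : Fin n → ℝ), v) t := by
      intro t
      have h : HasDerivAt (fun t : ℝ => x + t • v) v t := by
        simpa using ((hasDerivAt_id t).smul_const v).const_add x
      exact (hasDerivAt_const t x).prodMk h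
    have hgC : ContDiff ℝ 2 (fun t : ℝ => V x (x + t • v)) :=
      hV.comp (contDiff_const.prodMk (contDiff_const.add (contDiff_id.smul contDiff_const)))
    have hg' : ∀ t : ℝ, HasDerivAt (fun t : ℝ => V x (x + t • v))
        (fderiv ℝ (fun p : (Fin n → ℝ) × (Fin n → ℝ) => V p.1 p.2) (x, x + t • v) (0, v)) t := fun t =>
      HasFDerivAt.comp_hasDerivAt (l := fun p : (Fin n → ℝ) × (Fin n → ℝ) => V p.1 p.2) t (hFd (x, x + t • v)).hasFDerivAt (hγ t)
    have hgd : deriv (fun t : ℝ => V x (x + t • v))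
        = fun t => fderiv ℝ (fun p : (Fin n → ℝ) × (Fin n → ℝ) => V p.1 p.2) (x, x + t • v) (0, v) := funext fun t => (hg' t).deriv
    have hx0 : x + (0:ℝ) • v = x := by simp
    have hD2x' : HasFDerivAt (fderiv ℝ (fun p : (Fin n → ℝ) × (Fin n → ℝ) => V p.1 p.2)) (fderiv ℝ (fderiv ℝ (fun p : (Fin n → ℝ) × (Fin n → ℝ) => V p.1 p.2)) (x, x))
        (x, x + (0:ℝ) • v) := by rw [hx0]; exact hD2x
    have hg'' : HasDerivAt (fun t : ℝ => fderiv ℝ (fun p : (Fin n → ℝ) × (Fin n → ℝ) => V p.1 p.2) (x, x + t • v) (0, v))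
        (fderiv ℝ (fderiv ℝ (fun p : (Fin n → ℝ) × (Fin n → ℝ) => V p.1 p.2)) (x, x) (0, v) (0, v)) 0 := by
      have h1 : HasDerivAt (fun t : ℝ => fderiv ℝ (fun p : (Fin n → ℝ) × (Fin n → ℝ) => V p.1 p.2) (x, x + t • v))
          (fderiv ℝ (fderiv ℝ (fun p : (Fin n → ℝ) × (Fin n → ℝ) => V p.1 p.2)) (x, x) (0, v)) 0 := by
        simpa [hx0, Function.comp_def] using hD2x'.comp_hasDerivAt 0 (hγ 0)
      have h2 := h1.clm_apply (hasDerivAt_const 0 ((0 : Fin n → ℝ), v))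
      simpa using h2
    have hdd : deriv (deriv (fun t : ℝ => V x (x + t • v))) 0
        = fderiv ℝ (fderiv ℝ (fun p : (Fin n → ℝ) × (Fin n → ℝ) => V p.1 p.2)) (x, x) (0, v) (0, v) := by
      rw [hgd]; exact hg''.deriv
    have hdot : ∀ t : ℝ, (x - (x + t • v)) ⬝ᵥ (x - (x + t • v)) = (v ⬝ᵥ v) * t ^ 2 := by
      intro t
      have hx : x - (x + t • v) = (-t) • v := by
        rw [sub_add_eq_sub_sub, sub_self, zero_sub, ← neg_smul]
      rw [hx, smul_dotProduct, dotProduct_smul, smul_eq_mul, smul_eq_mul]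
      ring
    have h0 : (fun t : ℝ => V x (x + t • v)) 0 = 0 := by
      show V x (x + (0:ℝ) • v) = 0
      rw [hx0, hVxx x]
    have h1 : deriv (fun t : ℝ => V x (x + t • v)) 0 = 0 := by
      rw [hgd]
      show fderiv ℝ (fun p : (Fin n → ℝ) × (Fin n → ℝ) => V p.1 p.2) (x, x + (0:ℝ) • v) (0, v) = 0
      rw [hx0, ← eq1, hD2 x]
      simp
    have hlower := quad_lower hgC (a₁ * (v ⬝ᵥ v)) h0 h1 (fun t => by
      have h := hVlow x (x + t • v)
      rw [hdot t] at h
      calc a₁ * (v ⬝ᵥ v) * t ^ 2 = a₁ * (v ⬝ᵥ v * t ^ 2) := by ring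
        _ ≤ V x (x + t • v) := h)
    have hdneg : deriv (fun t : ℝ => -(V x (x + t • v)))
        = fun t => -(deriv (fun t : ℝ => V x (x + t • v)) t) := funext fun t => deriv.neg
    have hupper := quad_lower (g := fun t : ℝ => -(V x (x + t • v))) hgC.neg
      (-(a₂ * (v ⬝ᵥ v)))
      (by show -(V x (x + (0:ℝ) • v)) = 0; rw [hx0, hVxx x]; norm_num)
      (by rw [hdneg]; show -(deriv (fun t : ℝ => V x (x + t • v)) 0) = 0; rw [h1]; norm_num)
      (fun t => by
        have h := hVup x (x + t • v)
        rw [hdot t] at h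
        show -(a₂ * (v ⬝ᵥ v)) * t ^ 2 ≤ -(V x (x + t • v))
        nlinarith [h])
    have hddneg : deriv (deriv (fun t : ℝ => -(V x (x + t • v)))) 0
        = -(deriv (deriv (fun t : ℝ => V x (x + t • v))) 0) := by
      rw [hdneg]
      exact deriv.neg
    rw [hddneg, hdd] at hupper
    rw [hdd] at hlower
    rw [hMB v v]
    constructor
    · linarith
    · linarith
  · -- (iv)
    intro v w
    have hfun : (fun y => fderiv ℝ (V y) x v) = fun y => fderiv ℝ (fun p : (Fin n → ℝ) × (Fin n → ℝ) => V p.1 p.2) (y, x) (0, v) :=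
      funext fun y => eq1 y x v
    have h3 : HasFDerivAt (fun y : Fin n → ℝ => fderiv ℝ (fun p : (Fin n → ℝ) × (Fin n → ℝ) => V p.1 p.2) (y, x))
        ((fderiv ℝ (fderiv ℝ (fun p : (Fin n → ℝ) × (Fin n → ℝ) => V p.1 p.2)) (x, x)).comp
          (ContinuousLinearMap.inl ℝ (Fin n → ℝ) (Fin n → ℝ))) x :=
      HasFDerivAt.comp (f := fun y : Fin n → ℝ => (y, x)) x hD2x (hasFDerivAt_prodMk_left x x)
    have h4 := h3.clm_apply (hasFDerivAt_const ((0 : Fin n → ℝ), v) x)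
    have hΦ : fderiv ℝ (fun y => fderiv ℝ (V y) x v) x w
        = fderiv ℝ (fderiv ℝ (fun p : (Fin n → ℝ) × (Fin n → ℝ) => V p.1 p.2)) (x, x) (w, 0) (0, v) := by
      rw [hfun, h4.fderiv]
      simp
    -- diagonal vanishing
    have hdg : HasFDerivAt (fun y : Fin n → ℝ => (y, y))
        ((ContinuousLinearMap.id ℝ (Fin n → ℝ)).prod (ContinuousLinearMap.id ℝ (Fin n → ℝ))) x :=
      (hasFDerivAt_id x).prodMk (hasFDerivAt_id x)
    have h5 := (HasFDerivAt.comp (f := fun y : Fin n → ℝ => (y, y)) x hD2x hdg).clm_apply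
      (hasFDerivAt_const ((0 : Fin n → ℝ), v) x)
    have hdiag0 : (fun y : Fin n → ℝ => fderiv ℝ (fun p : (Fin n → ℝ) × (Fin n → ℝ) => V p.1 p.2) (y, y) (0, v)) = fun _ => (0:ℝ) :=
      funext fun y => by rw [← eq1, hD2 y]; simp
    simp only [Function.comp_def] at h5
    rw [hdiag0] at h5
    have h6 := h5.unique (hasFDerivAt_const (0:ℝ) x)
    have h7 : fderiv ℝ (fderiv ℝ (fun p : (Fin n → ℝ) × (Fin n → ℝ) => V p.1 p.2)) (x, x) (w, w) (0, v) = 0 := by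
      have h8 := ContinuousLinearMap.ext_iff.mp h6 w
      simpa using h8
    have hsplit : ((w, 0) : (Fin n → ℝ) × (Fin n → ℝ)) = (w, w) - (0, w) := by
      simp
    rw [hΦ, hsplit, map_sub]
    rw [ContinuousLinearMap.sub_apply, h7, hMB w v]
    ring
end

section
/- Let f : ℝⁿ → ℝⁿ be continuously differentiable, B : ℝⁿ → ℝ^{n×m} continuous, and let M : ℝⁿ → ℝ^{n×n} be a continuously differentiable symmetric-matrix-valued map with 2a₁ I ⪯ M(x) ⪯ 2a₂ I for all x and constants a₂ ≥ a₁ > 0, satisfying condition (C1_λ) for some λ > 0. Let x : [0,∞) → ℝⁿ be differentiable with x′(t) = f(x(t)) for all t ≥ 0, and let δ : [0,∞) → ℝⁿ be differentiable with δ′(t) = Df(x(t)) δ(t) and B(x(t))ᵀ M(x(t)) δ(t) = 0 for all t ≥ 0. Then δ(t)ᵀ M(x(t)) δ(t) ≤ e^{−λ t} · δ(0)ᵀ M(x(0)) δ(0) for all t ≥ 0, and consequently ‖δ(t)‖ ≤ √(a₂/a₁) · e^{−λ t / 2} · ‖δ(0)‖. -/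
/- STATEMENT 4: along a solution of ẋ = f(x), any solution of the differential
dynamics δ̇ = Df(x)δ which stays in the kernel of the differential output
(MB)ᵀδ decays exponentially in the metric M, under condition (C1_λ).
`Real.sqrt (v ⬝ᵥ v)` is the Euclidean norm of v. -/

open Matrix

attribute [local instance] Matrix.normedAddCommGroup Matrix.normedSpace

/-- Jacobian matrix of a map between finite-dimensional coordinate spaces. -/
noncomputable def jacM {ι κ : Type*} [Fintype ι] [DecidableEq ι] [Fintype κ]
    (f : (ι → ℝ) → (κ → ℝ)) (x : ι → ℝ) : Matrix κ ι ℝ :=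
  Matrix.of fun k j => fderiv ℝ f x (Pi.single j 1) k

theorem stmt4 {n m : ℕ}
    (f : (Fin n → ℝ) → (Fin n → ℝ)) (hf : ContDiff ℝ 1 f)
    (B : (Fin n → ℝ) → Matrix (Fin n) (Fin m) ℝ) (hB : Continuous B)
    (M : (Fin n → ℝ) → Matrix (Fin n) (Fin n) ℝ) (hM : ContDiff ℝ 1 M)
    (hMsymm : ∀ x, (M x).IsSymm)
    (a₁ a₂ : ℝ) (ha₁ : 0 < a₁) (ha₁₂ : a₁ ≤ a₂)
    (hbound : ∀ (x v : Fin n → ℝ), 2 * a₁ * (v ⬝ᵥ v) ≤ v ⬝ᵥ (M x *ᵥ v) ∧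
        v ⬝ᵥ (M x *ᵥ v) ≤ 2 * a₂ * (v ⬝ᵥ v))
    (lam : ℝ) (hlam : 0 < lam)
    -- condition (C1_λ)
    (hC1 : ∀ (x v : Fin n → ℝ), v ≠ 0 → (B x)ᵀ *ᵥ (M x *ᵥ v) = 0 →
      v ⬝ᵥ ((fderiv ℝ M x (f x) + (jacM f x)ᵀ * M x + M x * jacM f x) *ᵥ v)
        ≤ -lam * (v ⬝ᵥ (M x *ᵥ v)))
    (x δ : ℝ → (Fin n → ℝ))
    (hx : ∀ t, 0 ≤ t → HasDerivAt x (f (x t)) t)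
    (hδ : ∀ t, 0 ≤ t → HasDerivAt δ (jacM f (x t) *ᵥ δ t) t)
    (hout : ∀ t, 0 ≤ t → (B (x t))ᵀ *ᵥ (M (x t) *ᵥ δ t) = 0) :
    ∀ t, 0 ≤ t →
      δ t ⬝ᵥ (M (x t) *ᵥ δ t) ≤ Real.exp (-lam * t) * (δ 0 ⬝ᵥ (M (x 0) *ᵥ δ 0)) ∧
      Real.sqrt (δ t ⬝ᵥ δ t)
        ≤ Real.sqrt (a₂ / a₁) * Real.exp (-(lam * t) / 2) * Real.sqrt (δ 0 ⬝ᵥ δ 0) := by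
  set V : ℝ → ℝ := fun s => δ s ⬝ᵥ (M (x s) *ᵥ δ s) with hV
  -- derivative of V
  have key : ∀ t, 0 ≤ t → HasDerivAt V
      (δ t ⬝ᵥ ((fderiv ℝ M (x t) (f (x t)) + (jacM f (x t))ᵀ * M (x t)
        + M (x t) * jacM f (x t)) *ᵥ δ t)) t := by
    intro t ht
    have hA : HasDerivAt (fun s => M (x s)) (fderiv ℝ M (x t) (f (x t))) t :=
      ((hM.differentiable one_ne_zero) (x t)).hasFDerivAt.comp_hasDerivAt t (hx t ht)
    have hAij : ∀ i j, HasDerivAt (fun s => M (x s) i j)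
        (fderiv ℝ M (x t) (f (x t)) i j) t := fun i j =>
      hasDerivAt_pi.mp (hasDerivAt_pi.mp hA i) j
    have hδi : ∀ i, HasDerivAt (fun s => δ s i) ((jacM f (x t) *ᵥ δ t) i) t :=
      fun i => hasDerivAt_pi.mp (hδ t ht) i
    have hsum : HasDerivAt (fun s => ∑ i, ∑ j, δ s i * (M (x s) i j * δ s j))
        (∑ i, ∑ j, ((jacM f (x t) *ᵥ δ t) i * (M (x t) i j * δ t j)
          + δ t i * (fderiv ℝ M (x t) (f (x t)) i j * δ t j
            + M (x t) i j * (jacM f (x t) *ᵥ δ t) j))) t := by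
      apply HasDerivAt.fun_sum; intro i _; apply HasDerivAt.fun_sum; intro j _
      exact (hδi i).mul ((hAij i j).mul (hδi j))
    have hfun : V = fun s => ∑ i, ∑ j, δ s i * (M (x s) i j * δ s j) := by
      funext s
      simp [hV, dotProduct, mulVec, Finset.mul_sum]
    have hval : (∑ i, ∑ j, ((jacM f (x t) *ᵥ δ t) i * (M (x t) i j * δ t j)
          + δ t i * (fderiv ℝ M (x t) (f (x t)) i j * δ t j
            + M (x t) i j * (jacM f (x t) *ᵥ δ t) j)))
        = δ t ⬝ᵥ ((fderiv ℝ M (x t) (f (x t)) + (jacM f (x t))ᵀ * M (x t)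
          + M (x t) * jacM f (x t)) *ᵥ δ t) := by
      have e1 : δ t ⬝ᵥ (((jacM f (x t))ᵀ * M (x t)) *ᵥ δ t)
          = (jacM f (x t) *ᵥ δ t) ⬝ᵥ (M (x t) *ᵥ δ t) := by
        rw [← mulVec_mulVec, dotProduct_mulVec (δ t) (jacM f (x t))ᵀ, vecMul_transpose]
      have e2 : δ t ⬝ᵥ ((M (x t) * jacM f (x t)) *ᵥ δ t)
          = δ t ⬝ᵥ (M (x t) *ᵥ (jacM f (x t) *ᵥ δ t)) := by rw [← mulVec_mulVec]
      simp only [add_mulVec, dotProduct_add, e1, e2]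
      simp only [dotProduct, mulVec, Finset.mul_sum, Finset.sum_add_distrib, mul_add]
      ring_nf
    rw [hfun, ← hval]
    exact hsum
  -- the derivative bound
  have keyle : ∀ t, 0 ≤ t →
      (δ t ⬝ᵥ ((fderiv ℝ M (x t) (f (x t)) + (jacM f (x t))ᵀ * M (x t)
        + M (x t) * jacM f (x t)) *ᵥ δ t)) ≤ -lam * V t := by
    intro t ht
    by_cases hzero : δ t = 0
    · simp [hV, hzero]
    · exact hC1 (x t) (δ t) hzero (hout t ht)
  -- Gronwall via monotonicity of g(s) = exp(lam s) V s
  set g : ℝ → ℝ := fun s => Real.exp (lam * s) * V s with hg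
  have hgderiv : ∀ t, 0 ≤ t → HasDerivAt g
      (lam * Real.exp (lam * t) * V t + Real.exp (lam * t)
        * (δ t ⬝ᵥ ((fderiv ℝ M (x t) (f (x t)) + (jacM f (x t))ᵀ * M (x t)
          + M (x t) * jacM f (x t)) *ᵥ δ t))) t := by
    intro t ht
    have h1 : HasDerivAt (fun s => Real.exp (lam * s)) (lam * Real.exp (lam * t)) t := by
      have := (hasDerivAt_id t).const_mul lam
      simpa [mul_comm, Function.comp_def] using (Real.hasDerivAt_exp (lam * t)).comp t this
    exact h1.mul (key t ht)
  have hanti : AntitoneOn g (Set.Ici (0 : ℝ)) := by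
    apply antitoneOn_of_deriv_nonpos (convex_Ici 0)
    · exact fun t ht => (hgderiv t ht).continuousAt.continuousWithinAt
    · intro t ht
      rw [interior_Ici] at ht
      exact (hgderiv t (le_of_lt ht)).differentiableAt.differentiableWithinAt
    · intro t ht
      rw [interior_Ici] at ht
      rw [(hgderiv t (le_of_lt ht)).deriv]
      have h2 := keyle t (le_of_lt ht)
      have h3 : Real.exp (lam * t)
          * (δ t ⬝ᵥ ((fderiv ℝ M (x t) (f (x t)) + (jacM f (x t))ᵀ * M (x t)
            + M (x t) * jacM f (x t)) *ᵥ δ t)) ≤ Real.exp (lam * t) * (-lam * V t) :=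
        mul_le_mul_of_nonneg_left h2 (Real.exp_pos _).le
      nlinarith [Real.exp_pos (lam * t)]
  intro t ht
  have hgle : g t ≤ g 0 := hanti Set.self_mem_Ici ht ht
  have h1 : V t ≤ Real.exp (-lam * t) * V 0 := by
    have : Real.exp (lam * t) * V t ≤ V 0 := by simpa [hg] using hgle
    have hpos := Real.exp_pos (lam * t)
    rw [neg_mul, Real.exp_neg]
    rw [← le_div_iff₀' hpos] at this
    rwa [div_eq_inv_mul] at this
  refine ⟨h1, ?_⟩
  -- part 2
  have hb1 := (hbound (x t) (δ t)).1
  have hb2 := (hbound (x 0) (δ 0)).2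
  have hdd : δ t ⬝ᵥ δ t ≤ a₂ / a₁ * Real.exp (-lam * t) * (δ 0 ⬝ᵥ δ 0) := by
    have hexp := (Real.exp_pos (-lam * t)).le
    have h4 : 2 * a₁ * (δ t ⬝ᵥ δ t) ≤ Real.exp (-lam * t) * (2 * a₂ * (δ 0 ⬝ᵥ δ 0)) :=
      le_trans (le_trans hb1 h1) (mul_le_mul_of_nonneg_left hb2 hexp)
    rw [div_mul_eq_mul_div, div_mul_eq_mul_div, le_div_iff₀ ha₁]
    nlinarith
  calc Real.sqrt (δ t ⬝ᵥ δ t)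
      ≤ Real.sqrt (a₂ / a₁ * Real.exp (-lam * t) * (δ 0 ⬝ᵥ δ 0)) := Real.sqrt_le_sqrt hdd
    _ = Real.sqrt (a₂ / a₁) * Real.exp (-(lam * t) / 2) * Real.sqrt (δ 0 ⬝ᵥ δ 0) := by
        have ha₂ : (0:ℝ) < a₂ := lt_of_lt_of_le ha₁ ha₁₂
        rw [Real.sqrt_mul (mul_nonneg (div_nonneg ha₂.le ha₁.le) (Real.exp_pos _).le),
            Real.sqrt_mul (div_nonneg ha₂.le ha₁.le)]
        congr 2
        rw [show (-lam * t) = -(lam * t) / 2 + -(lam * t) / 2 by ring, Real.exp_add,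
            Real.sqrt_mul_self (Real.exp_pos _).le]
end

section
/- Let f : ℝⁿ → ℝⁿ be differentiable, let M : ℝⁿ → ℝ^{n×n} be a differentiable symmetric-matrix-valued map with M(x) positive definite for every x, and set W(x) := M(x)⁻¹. Let B : ℝⁿ → ℝ^{n×m} (m < n) have full column rank, and let B_⊥ : ℝⁿ → ℝ^{n×(n−m)} have full column rank with B(x)ᵀ B_⊥(x) = 0 for all x. Fix x ∈ ℝⁿ. Then: (i) ∂_g W(x) = −W(x) (∂_g M(x)) W(x) for any direction map g; (ii) the implication [for every nonzero v ∈ ℝⁿ with B(x)ᵀ M(x) v = 0, vᵀ(∂_f M(x) + Df(x)ᵀ M(x) + M(x) Df(x)) v < 0] holds if and only if the (n−m)×(n−m) matrix B_⊥(x)ᵀ(−∂_f W(x) + Df(x) W(x) + W(x) Df(x)ᵀ) B_⊥(x) is negative definite; (iii) for each i = 1,…,m, ∂_{B_i} M(x) + DB_i(x)ᵀ M(x) + M(x) DB_i(x) = 0 if and only if ∂_{B_i} W(x) − DB_i(x) W(x) − W(x) DB_i(x)ᵀ = 0. -/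
/- STATEMENT 5: duality between the metric M and the dual metric W = M⁻¹:
derivative of the inverse, equivalence of the contraction condition with the
dual LMI along the annihilator B_⊥, and equivalence of the two PDE forms. -/

open Matrix

attribute [local instance] Matrix.normedAddCommGroup Matrix.normedSpace

section Stmt5Aux

variable {n a b : ℕ}

noncomputable def entryCLM (a b : ℕ) (i : Fin a) (j : Fin b) :
    Matrix (Fin a) (Fin b) ℝ →L[ℝ] ℝ :=
  LinearMap.toContinuousLinearMap
    { toFun := fun A => A i j
      map_add' := fun _ _ => rfl
      map_smul' := fun _ _ => rfl }

theorem diffAt_entry {F : (Fin n → ℝ) → Matrix (Fin a) (Fin b) ℝ} {x : Fin n → ℝ}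
    (hF : DifferentiableAt ℝ F x) (i : Fin a) (j : Fin b) :
    DifferentiableAt ℝ (fun y => F y i j) x :=
  ((entryCLM a b i j).differentiableAt).comp x hF

theorem fderiv_entry {F : (Fin n → ℝ) → Matrix (Fin a) (Fin b) ℝ} {x : Fin n → ℝ}
    (hF : DifferentiableAt ℝ F x) (i : Fin a) (j : Fin b) (d : Fin n → ℝ) :
    fderiv ℝ (fun y => F y i j) x d = fderiv ℝ F x d i j := by
  have h := ((entryCLM a b i j).hasFDerivAt.comp x hF.hasFDerivAt).fderiv
  rw [show (fun y => F y i j) = (entryCLM a b i j) ∘ F from rfl, h]; rfl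

theorem diffAt_of_entries {F : (Fin n → ℝ) → Matrix (Fin a) (Fin b) ℝ} {x : Fin n → ℝ}
    (h : ∀ i j, DifferentiableAt ℝ (fun y => F y i j) x) : DifferentiableAt ℝ F x :=
  differentiableAt_pi.2 fun i => differentiableAt_pi.2 fun j => h i j

theorem det_diffAt {F : (Fin n → ℝ) → Matrix (Fin a) (Fin a) ℝ} {x : Fin n → ℝ}
    (hF : DifferentiableAt ℝ F x) :
    DifferentiableAt ℝ (fun y => (F y).det) x := by
  classical
  have hprod : ∀ (σ : Equiv.Perm (Fin a)) (s : Finset (Fin a)),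
      DifferentiableAt ℝ (fun y => ∏ i ∈ s, F y (σ i) i) x := by
    intro σ s
    induction s using Finset.induction_on with
    | empty => simpa using differentiableAt_const (1 : ℝ)
    | insert _ _ hns ih =>
        simp only [Finset.prod_insert hns]
        exact (diffAt_entry hF _ _).mul ih
  have hdet : (fun y => (F y).det)
      = fun y => ∑ σ : Equiv.Perm (Fin a),
          ((Equiv.Perm.sign σ : ℤ) : ℝ) * ∏ i, F y (σ i) i := by
    funext y; rw [Matrix.det_apply']
  rw [hdet]
  exact DifferentiableAt.fun_sum fun σ _ => (hprod σ Finset.univ).const_mul _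

end Stmt5Aux

theorem stmt5 {n m : ℕ} (hmn : m < n)
    (f : (Fin n → ℝ) → (Fin n → ℝ)) (hf : Differentiable ℝ f)
    (M : (Fin n → ℝ) → Matrix (Fin n) (Fin n) ℝ) (hM : Differentiable ℝ M)
    (hMsymm : ∀ x, (M x).IsSymm) (hMpos : ∀ x, (M x).PosDef)
    (W : (Fin n → ℝ) → Matrix (Fin n) (Fin n) ℝ) (hW : W = fun x => (M x)⁻¹)
    (B : (Fin n → ℝ) → Matrix (Fin n) (Fin m) ℝ) (hBdiff : Differentiable ℝ B)
    (hBrank : ∀ x, Function.Injective (B x).mulVec)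
    (Bp : (Fin n → ℝ) → Matrix (Fin n) (Fin (n - m)) ℝ)
    (hBprank : ∀ x, Function.Injective (Bp x).mulVec)
    (hannih : ∀ x, (B x)ᵀ * Bp x = 0)
    (x : Fin n → ℝ) :
    -- (i) derivative of the inverse metric
    (∀ d : Fin n → ℝ, fderiv ℝ W x d = -(W x * fderiv ℝ M x d * W x)) ∧
    -- (ii) equivalence with the dual condition
    ((∀ v : Fin n → ℝ, v ≠ 0 → (B x)ᵀ *ᵥ (M x *ᵥ v) = 0 →
        v ⬝ᵥ ((fderiv ℝ M x (f x) + (jacM f x)ᵀ * M x + M x * jacM f x) *ᵥ v) < 0)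
      ↔ (∀ w : Fin (n - m) → ℝ, w ≠ 0 →
          w ⬝ᵥ (((Bp x)ᵀ * (-(fderiv ℝ W x (f x)) + jacM f x * W x + W x * (jacM f x)ᵀ)
                  * Bp x) *ᵥ w) < 0)) ∧
    -- (iii) equivalence of the two PDE forms, columnwise
    (∀ i : Fin m,
      (fderiv ℝ M x (fun k => B x k i)
          + (jacM (fun y k => B y k i) x)ᵀ * M x
          + M x * jacM (fun y k => B y k i) x = 0)
      ↔ (fderiv ℝ W x (fun k => B x k i)
          - jacM (fun y k => B y k i) x * W x
          - W x * (jacM (fun y k => B y k i) x)ᵀ = 0)) := by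
  classical
  have hdet : ∀ y, IsUnit (M y).det := fun y => (hMpos y).det_pos.ne'.isUnit
  have hWdef : ∀ y, W y = (M y)⁻¹ := fun y => by rw [hW]
  have hMW : ∀ y, M y * W y = 1 := fun y => by
    rw [hWdef y]; exact Matrix.mul_nonsing_inv _ (hdet y)
  have hWM : ∀ y, W y * M y = 1 := fun y => by
    rw [hWdef y]; exact Matrix.nonsing_inv_mul _ (hdet y)
  have hWs : (W x)ᵀ = W x := by
    rw [hWdef x, Matrix.transpose_nonsing_inv, (hMsymm x).eq]
  -- differentiability of W
  have hWdiff : Differentiable ℝ W := by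
    intro y
    apply diffAt_of_entries
    intro i j
    have hWentry : (fun y => W y i j)
        = fun y => ((M y).det)⁻¹ * (M y).adjugate i j := by
      funext z
      rw [hWdef z, Matrix.inv_def, Matrix.smul_apply, Ring.inverse_eq_inv, smul_eq_mul]
    rw [hWentry]
    have hdd : DifferentiableAt ℝ (fun y => (M y).det) y := det_diffAt (hM y)
    have hadj : DifferentiableAt ℝ (fun y => (M y).adjugate i j) y := by
      have hAE : (fun y => (M y).adjugate i j)
          = fun y => ((M y).updateRow j (Pi.single i 1)).det := by
        funext z; rw [Matrix.adjugate_apply]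
      rw [hAE]
      apply det_diffAt
      apply diffAt_of_entries
      intro k l
      by_cases hk : k = j
      · simp only [Matrix.updateRow_apply, hk, if_true]
        exact differentiableAt_const _
      · simp only [Matrix.updateRow_apply, hk, if_false]
        exact diffAt_entry (hM y) k l
    exact (hdd.inv ((hMpos y).det_pos.ne')).mul hadj
  -- part (i)
  have hpart1 : ∀ d : Fin n → ℝ, fderiv ℝ W x d = -(W x * fderiv ℝ M x d * W x) := by
    intro d
    have key : fderiv ℝ M x d * W x + M x * fderiv ℝ W x d = 0 := by
      ext i j
      have hdM : ∀ k l, DifferentiableAt ℝ (fun y => M y k l) x := fun k l =>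
        diffAt_entry (hM x) k l
      have hdW : ∀ k l, DifferentiableAt ℝ (fun y => W y k l) x := fun k l =>
        diffAt_entry (hWdiff x) k l
      have hconst : (fun y => ∑ k, M y i k * W y k j)
          = fun _ => (1 : Matrix (Fin n) (Fin n) ℝ) i j := by
        funext z; rw [← Matrix.mul_apply, hMW z]
      have h0 : fderiv ℝ (fun y => ∑ k, M y i k * W y k j) x d = 0 := by
        rw [hconst, (hasFDerivAt_const _ _).fderiv]; rfl
      have hsum : fderiv ℝ (fun y => ∑ k, M y i k * W y k j) x
          = ∑ k, fderiv ℝ (fun y => M y i k * W y k j) x :=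
        fderiv_fun_sum fun k _ => (hdM i k).mul (hdW k j)
      have hmul : ∀ k, fderiv ℝ (fun y => M y i k * W y k j) x d
          = M x i k * fderiv ℝ (fun y => W y k j) x d
            + W x k j * fderiv ℝ (fun y => M y i k) x d := by
        intro k
        rw [fderiv_fun_mul (hdM i k) (hdW k j)]
        simp [smul_eq_mul]
      have h0' : ∑ k, (M x i k * fderiv ℝ W x d k j + W x k j * fderiv ℝ M x d i k) = 0 := by
        calc ∑ k, (M x i k * fderiv ℝ W x d k j + W x k j * fderiv ℝ M x d i k)
            = ∑ k, fderiv ℝ (fun y => M y i k * W y k j) x d := by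
              refine Finset.sum_congr rfl fun k _ => ?_
              rw [hmul k, fderiv_entry (hM x) i k d, fderiv_entry (hWdiff x) k j d]
          _ = (∑ k, fderiv ℝ (fun y => M y i k * W y k j) x) d := by
              rw [ContinuousLinearMap.coe_sum']; simp
          _ = 0 := by rw [← hsum]; exact h0
      rw [Finset.sum_add_distrib] at h0'
      simp only [Matrix.add_apply, Matrix.mul_apply, Matrix.zero_apply]
      have hc : ∑ k, fderiv ℝ M x d i k * W x k j = ∑ k, W x k j * fderiv ℝ M x d i k :=
        Finset.sum_congr rfl fun k _ => mul_comm _ _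
      rw [hc]
      linarith [h0']
    have h2 : M x * fderiv ℝ W x d = -(fderiv ℝ M x d * W x) :=
      eq_neg_of_add_eq_zero_right key
    calc fderiv ℝ W x d = (W x * M x) * fderiv ℝ W x d := by
          rw [hWM x, Matrix.one_mul]
      _ = W x * (M x * fderiv ℝ W x d) := Matrix.mul_assoc _ _ _
      _ = W x * -(fderiv ℝ M x d * W x) := by rw [h2]
      _ = -(W x * fderiv ℝ M x d * W x) := by
          rw [Matrix.mul_neg, Matrix.mul_assoc]
  -- shared algebra
  have key2 : ∀ P A : Matrix (Fin n) (Fin n) ℝ,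
      W x * (P + Aᵀ * M x + M x * A) * W x = W x * P * W x + W x * Aᵀ + A * W x := by
    intro P A
    simp only [Matrix.mul_add, Matrix.add_mul]
    rw [show W x * (Aᵀ * M x) * W x = W x * Aᵀ by
          rw [← Matrix.mul_assoc (W x) Aᵀ (M x), Matrix.mul_assoc (W x * Aᵀ) (M x) (W x),
            hMW x, Matrix.mul_one],
        show W x * (M x * A) * W x = A * W x by
          rw [← Matrix.mul_assoc (W x) (M x) A, hWM x, Matrix.one_mul]]
  have hdot : ∀ (S : Matrix (Fin n) (Fin n) ℝ) (w : Fin (n - m) → ℝ),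
      w ⬝ᵥ (((Bp x)ᵀ * (W x * S * W x) * Bp x) *ᵥ w)
        = (W x *ᵥ (Bp x *ᵥ w)) ⬝ᵥ (S *ᵥ (W x *ᵥ (Bp x *ᵥ w))) := by
    intro S w
    rw [← Matrix.mulVec_mulVec, ← Matrix.mulVec_mulVec, ← Matrix.mulVec_mulVec,
      ← Matrix.mulVec_mulVec, Matrix.dotProduct_mulVec w, Matrix.vecMul_transpose,
      Matrix.dotProduct_mulVec (Bp x *ᵥ w) (W x), ← hWs, Matrix.vecMul_transpose, hWs]
  have hkermem : ∀ u : Fin n → ℝ, (B x)ᵀ *ᵥ u = 0 → ∃ w, Bp x *ᵥ w = u := by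
    intro u hu
    have h1 : LinearMap.range (Bp x).mulVecLin ≤ LinearMap.ker (B x)ᵀ.mulVecLin := by
      rintro z ⟨w, rfl⟩
      simp only [LinearMap.mem_ker, Matrix.mulVecLin_apply, Matrix.mulVec_mulVec, hannih x,
        Matrix.zero_mulVec]
    have hfr2 : Module.finrank ℝ ↥(LinearMap.range (Bp x).mulVecLin) = n - m := by
      rw [LinearMap.finrank_range_of_inj (by exact hBprank x)]
      exact Module.finrank_fin_fun ℝ
    have hrB : Module.finrank ℝ ↥(LinearMap.range (B x).mulVecLin) = m := by
      rw [LinearMap.finrank_range_of_inj (by exact hBrank x)]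
      exact Module.finrank_fin_fun ℝ
    have hrBt : Module.finrank ℝ ↥(LinearMap.range (B x)ᵀ.mulVecLin) = m := by
      have h := Matrix.rank_transpose (B x)
      unfold Matrix.rank at h
      rw [h, hrB]
    have hfr1 : Module.finrank ℝ ↥(LinearMap.ker (B x)ᵀ.mulVecLin) = n - m := by
      have hrn := LinearMap.finrank_range_add_finrank_ker (B x)ᵀ.mulVecLin
      rw [hrBt, Module.finrank_fin_fun ℝ] at hrn
      omega
    have heq := Submodule.eq_of_le_of_finrank_eq h1 (hfr2.trans hfr1.symm)
    have hu' : u ∈ LinearMap.range (Bp x).mulVecLin := by rw [heq]; exact hu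
    obtain ⟨w, hw⟩ := hu'
    exact ⟨w, hw⟩
  refine ⟨hpart1, ?_, ?_⟩
  · -- part (ii)
    have hWS : -(fderiv ℝ W x (f x)) + jacM f x * W x + W x * (jacM f x)ᵀ
        = W x * (fderiv ℝ M x (f x) + (jacM f x)ᵀ * M x + M x * jacM f x) * W x := by
      rw [hpart1 (f x), neg_neg, key2]
      abel
    rw [hWS]
    constructor
    · intro ha w hw
      have hzne : Bp x *ᵥ w ≠ 0 := fun h =>
        hw (hBprank x (by rw [Matrix.mulVec_zero]; exact h))
      have hMv : M x *ᵥ (W x *ᵥ (Bp x *ᵥ w)) = Bp x *ᵥ w := by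
        rw [Matrix.mulVec_mulVec, hMW x, Matrix.one_mulVec]
      have hvne : W x *ᵥ (Bp x *ᵥ w) ≠ 0 := fun h =>
        hzne (by rw [← hMv, h, Matrix.mulVec_zero])
      have hBv : (B x)ᵀ *ᵥ (M x *ᵥ (W x *ᵥ (Bp x *ᵥ w))) = 0 := by
        rw [hMv, Matrix.mulVec_mulVec, hannih x, Matrix.zero_mulVec]
      have hlt := ha _ hvne hBv
      rw [hdot]
      exact hlt
    · intro hb v hv hBv
      obtain ⟨w, hw⟩ := hkermem (M x *ᵥ v) hBv
      have hvW : W x *ᵥ (Bp x *ᵥ w) = v := by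
        rw [hw, Matrix.mulVec_mulVec, hWM x, Matrix.one_mulVec]
      have hwne : w ≠ 0 := by
        rintro rfl
        rw [Matrix.mulVec_zero] at hw
        apply hv
        have hv2 : v = W x *ᵥ (M x *ᵥ v) := by
          rw [Matrix.mulVec_mulVec, hWM x, Matrix.one_mulVec]
        rw [hv2, ← hw, Matrix.mulVec_zero]
      have hlt := hb w hwne
      rw [hdot] at hlt
      rw [← hvW]
      exact hlt
  · -- part (iii)
    intro i
    have h3 : fderiv ℝ W x (fun k => B x k i) - jacM (fun y k => B y k i) x * W x
        - W x * (jacM (fun y k => B y k i) x)ᵀ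
        = -(W x * (fderiv ℝ M x (fun k => B x k i)
            + (jacM (fun y k => B y k i) x)ᵀ * M x
            + M x * jacM (fun y k => B y k i) x) * W x) := by
      rw [hpart1, key2]
      abel
    constructor
    · intro h
      rw [h3, h]
      simp
    · intro h
      rw [h3] at h
      have h5 : W x * (fderiv ℝ M x (fun k => B x k i)
          + (jacM (fun y k => B y k i) x)ᵀ * M x
          + M x * jacM (fun y k => B y k i) x) * W x = 0 := neg_eq_zero.mp h
      have habs : ∀ N : Matrix (Fin n) (Fin n) ℝ, W x * N * W x = 0 → N = 0 := by
        intro N h0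
        calc N = (M x * W x) * N * (W x * M x) := by
              rw [hMW x, hWM x, Matrix.one_mul, Matrix.mul_one]
          _ = M x * (W x * N * W x) * M x := by simp only [Matrix.mul_assoc]
          _ = 0 := by rw [h0, Matrix.mul_zero, Matrix.zero_mul]
      exact habs _ h5
end

section
/- Let f : ℝⁿ → ℝⁿ be continuously differentiable, B : ℝⁿ → ℝ^{n×m} continuous with B(x) of full column rank, and let M : ℝⁿ → ℝ^{n×n} be a continuously differentiable symmetric-matrix-valued map with p̲ I ⪯ M(x) ⪯ p̄ I for all x (p̄ ≥ p̲ > 0), satisfying condition (C1_λ) for some λ > 0. Set P(x) := M(x)B(x) and R(x) := (P(x)ᵀP(x))⁻¹. Then there exist a continuous function γ : ℝⁿ → [0,∞) and a constant λ₀ > 0 such that for every x ∈ ℝⁿ and every v ∈ ℝⁿ: vᵀ(∂_f M(x) + Df(x)ᵀ M(x) + M(x) Df(x)) v − 2γ(x) · vᵀ P(x) R(x) P(x)ᵀ v ≤ −λ₀ vᵀ M(x) v. -/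
/- STATEMENT 9: under condition (C1_λ), there exist a continuous nonnegative
damping gain γ and a rate λ₀ > 0 such that damping injection along the
projection P R Pᵀ (P = MB, R = (PᵀP)⁻¹) makes the differential dynamics
contract at rate λ₀ in the metric M. -/

open Matrix

attribute [local instance] Matrix.normedAddCommGroup Matrix.normedSpace

private lemma amgm_term (x y z t : ℝ) (ht : 0 < t) :
    x * (y * z) ≤ |y| * (x ^ 2 / (2 * t) + t * z ^ 2 / 2) := by
  have h2 : |x| * |z| ≤ x ^ 2 / (2 * t) + t * z ^ 2 / 2 := by
    have he : x ^ 2 / (2 * t) + t * z ^ 2 / 2 = (x ^ 2 + t ^ 2 * z ^ 2) / (2 * t) := by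
      field_simp
    rw [he, le_div_iff₀ (by positivity)]
    nlinarith [sq_nonneg (|x| - t * |z|), sq_abs x, sq_abs z, abs_nonneg x, abs_nonneg z]
  calc x * (y * z) ≤ |x * (y * z)| := le_abs_self _
    _ = |y| * (|x| * |z|) := by rw [abs_mul, abs_mul]; ring
    _ ≤ |y| * (x ^ 2 / (2 * t) + t * z ^ 2 / 2) :=
        mul_le_mul_of_nonneg_left h2 (abs_nonneg y)

private lemma dot_mulVec_bound {n : ℕ} (U : Matrix (Fin n) (Fin n) ℝ) (a b : Fin n → ℝ)
    (t : ℝ) (ht : 0 < t) :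
    a ⬝ᵥ (U *ᵥ b) ≤ (∑ i, ∑ j, |U i j|) / (2 * t) * (a ⬝ᵥ a)
      + (∑ i, ∑ j, |U i j|) * t / 2 * (b ⬝ᵥ b) := by
  set C := ∑ i, ∑ j, |U i j| with hCdef
  have habs : ∀ (i j : Fin n), (0:ℝ) ≤ |U i j| := fun i j => abs_nonneg _
  have hrow : ∀ i, ∑ j, |U i j| ≤ C :=
    fun i => Finset.single_le_sum
      (fun i _ => Finset.sum_nonneg fun j _ => habs i j) (Finset.mem_univ i)
  have hcol : ∀ j, ∑ i, |U i j| ≤ C := by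
    intro j
    calc ∑ i, |U i j| ≤ ∑ i, ∑ j', |U i j'| :=
          Finset.sum_le_sum fun i _ =>
            Finset.single_le_sum (fun j' _ => habs i j') (Finset.mem_univ j)
      _ = C := rfl
  have hexp : a ⬝ᵥ (U *ᵥ b) = ∑ i, ∑ j, a i * (U i j * b j) := by
    simp [dotProduct, Matrix.mulVec, Finset.mul_sum]
  have step1 : a ⬝ᵥ (U *ᵥ b) ≤ ∑ i, ∑ j, |U i j| * ((a i) ^ 2 / (2 * t) + t * (b j) ^ 2 / 2) := by
    rw [hexp]
    exact Finset.sum_le_sum fun i _ => Finset.sum_le_sum fun j _ => amgm_term _ _ _ _ ht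
  have step2 : (∑ i, ∑ j, |U i j| * ((a i) ^ 2 / (2 * t) + t * (b j) ^ 2 / 2))
      = (∑ i, (∑ j, |U i j|) * ((a i) ^ 2 / (2 * t)))
        + (∑ j, (∑ i, |U i j|) * (t * (b j) ^ 2 / 2)) := by
    simp only [mul_add, Finset.sum_add_distrib]
    congr 1
    · exact Finset.sum_congr rfl fun i _ => (Finset.sum_mul ..).symm
    · rw [Finset.sum_comm]
      exact Finset.sum_congr rfl fun j _ => (Finset.sum_mul ..).symm
  have step3 : (∑ i, (∑ j, |U i j|) * ((a i) ^ 2 / (2 * t))) ≤ C / (2 * t) * (a ⬝ᵥ a) := by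
    have : a ⬝ᵥ a = ∑ i, (a i) ^ 2 := by simp [dotProduct, sq]
    rw [this, Finset.mul_sum]
    refine Finset.sum_le_sum fun i _ => ?_
    calc (∑ j, |U i j|) * ((a i) ^ 2 / (2 * t)) ≤ C * ((a i) ^ 2 / (2 * t)) :=
          mul_le_mul_of_nonneg_right (hrow i) (by positivity)
      _ = C / (2 * t) * (a i) ^ 2 := by ring
  have step4 : (∑ j, (∑ i, |U i j|) * (t * (b j) ^ 2 / 2)) ≤ C * t / 2 * (b ⬝ᵥ b) := by
    have : b ⬝ᵥ b = ∑ j, (b j) ^ 2 := by simp [dotProduct, sq]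
    rw [this, Finset.mul_sum]
    refine Finset.sum_le_sum fun j _ => ?_
    calc (∑ i, |U i j|) * (t * (b j) ^ 2 / 2) ≤ C * (t * (b j) ^ 2 / 2) :=
          mul_le_mul_of_nonneg_right (hcol j) (by positivity)
      _ = C * t / 2 * (b j) ^ 2 := by ring
  calc a ⬝ᵥ (U *ᵥ b) ≤ _ := step1
    _ = _ := step2
    _ ≤ C / (2 * t) * (a ⬝ᵥ a) + C * t / 2 * (b ⬝ᵥ b) := add_le_add step3 step4

private lemma projection_props {n m : ℕ} (Q : Matrix (Fin n) (Fin m) ℝ)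
    (h : IsUnit (Qᵀ * Q).det) :
    Qᵀ * (Q * (Qᵀ * Q)⁻¹ * Qᵀ) = Qᵀ ∧
    (Q * (Qᵀ * Q)⁻¹ * Qᵀ) * (Q * (Qᵀ * Q)⁻¹ * Qᵀ) = Q * (Qᵀ * Q)⁻¹ * Qᵀ ∧
    (Q * (Qᵀ * Q)⁻¹ * Qᵀ)ᵀ = Q * (Qᵀ * Q)⁻¹ * Qᵀ := by
  have h1 : Qᵀ * (Q * (Qᵀ * Q)⁻¹ * Qᵀ) = Qᵀ := by
    rw [← Matrix.mul_assoc, ← Matrix.mul_assoc, Matrix.mul_nonsing_inv _ h, Matrix.one_mul]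
  refine ⟨h1, ?_, ?_⟩
  · rw [Matrix.mul_assoc (Q * (Qᵀ * Q)⁻¹) Qᵀ, h1]
  · rw [Matrix.transpose_mul, Matrix.transpose_mul, Matrix.transpose_transpose,
      Matrix.transpose_nonsing_inv, Matrix.transpose_mul, Matrix.transpose_transpose,
      ← Matrix.mul_assoc]

theorem stmt9 {n m : ℕ}
    (f : (Fin n → ℝ) → (Fin n → ℝ)) (hf : ContDiff ℝ 1 f)
    (B : (Fin n → ℝ) → Matrix (Fin n) (Fin m) ℝ) (hB : Continuous B)
    (hBrank : ∀ x, Function.Injective (B x).mulVec)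
    (M : (Fin n → ℝ) → Matrix (Fin n) (Fin n) ℝ) (hM : ContDiff ℝ 1 M)
    (hMsymm : ∀ x, (M x).IsSymm)
    (p₁ p₂ : ℝ) (hp₁ : 0 < p₁) (hp₁₂ : p₁ ≤ p₂)
    (hbound : ∀ (x v : Fin n → ℝ), p₁ * (v ⬝ᵥ v) ≤ v ⬝ᵥ (M x *ᵥ v) ∧
        v ⬝ᵥ (M x *ᵥ v) ≤ p₂ * (v ⬝ᵥ v))
    (lam : ℝ) (hlam : 0 < lam)
    -- condition (C1_λ)
    (hC1 : ∀ (x v : Fin n → ℝ), v ≠ 0 → (B x)ᵀ *ᵥ (M x *ᵥ v) = 0 →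
      v ⬝ᵥ ((fderiv ℝ M x (f x) + (jacM f x)ᵀ * M x + M x * jacM f x) *ᵥ v)
        ≤ -lam * (v ⬝ᵥ (M x *ᵥ v)))
    (P : (Fin n → ℝ) → Matrix (Fin n) (Fin m) ℝ) (hP : P = fun x => M x * B x)
    (R : (Fin n → ℝ) → Matrix (Fin m) (Fin m) ℝ) (hR : R = fun x => ((P x)ᵀ * P x)⁻¹) :
    ∃ (γ : (Fin n → ℝ) → ℝ) (lam₀ : ℝ), Continuous γ ∧ (∀ x, 0 ≤ γ x) ∧ 0 < lam₀ ∧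
      ∀ (x v : Fin n → ℝ),
        v ⬝ᵥ ((fderiv ℝ M x (f x) + (jacM f x)ᵀ * M x + M x * jacM f x) *ᵥ v)
          - 2 * γ x * (v ⬝ᵥ ((P x * R x * (P x)ᵀ) *ᵥ v))
          ≤ -lam₀ * (v ⬝ᵥ (M x *ᵥ v)) := by
  classical
  set c : ℝ := lam * p₁ / 2 with hc
  have hcpos : 0 < c := by positivity
  set U : (Fin n → ℝ) → Matrix (Fin n) (Fin n) ℝ :=
    fun x => (fderiv ℝ M x (f x) + (jacM f x)ᵀ * M x + M x * jacM f x) + (lam / 2) • M x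
    with hUdef
  set Cs : (Fin n → ℝ) → ℝ := fun x => ∑ i, ∑ j, |U x i j| with hCs
  have hCnn : ∀ x, 0 ≤ Cs x := fun x =>
    Finset.sum_nonneg fun i _ => Finset.sum_nonneg fun j _ => abs_nonneg _
  have hMcont : Continuous M := hM.continuous
  have hUcont : Continuous U := by
    rw [hUdef]
    have h1 : Continuous fun x => fderiv ℝ M x (f x) :=
      (hM.continuous_fderiv one_ne_zero).clm_apply hf.continuous
    have hjac : Continuous fun x => jacM f x := by
      apply continuous_matrix
      intro i j
      exact (continuous_apply i).comp ((hf.continuous_fderiv one_ne_zero).clm_apply continuous_const)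
    exact ((h1.add ((hjac.matrix_transpose).matrix_mul hMcont)).add
      (hMcont.matrix_mul hjac)).add (hMcont.const_smul (lam / 2))
  have hCscont : Continuous Cs := by
    rw [hCs]
    apply continuous_finset_sum; intro i _
    apply continuous_finset_sum; intro j _
    exact ((continuous_apply j).comp ((continuous_apply i).comp hUcont)).abs
  refine ⟨fun x => (Cs x + Cs x * (Cs x + 1) / c) / 2, lam / 2, ?_, ?_, by positivity, ?_⟩
  · exact (hCscont.add ((hCscont.mul (hCscont.add continuous_const)).div_const c)).div_const 2
  · intro x
    have h0 := hCnn x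
    have h1 : 0 ≤ Cs x * (Cs x + 1) / c := by positivity
    linarith
  · intro x v
    simp only [hP, hR]
    set Px : Matrix (Fin n) (Fin m) ℝ := M x * B x with hPx
    set Pix : Matrix (Fin n) (Fin n) ℝ := Px * (Pxᵀ * Px)⁻¹ * Pxᵀ with hPix
    have hMT : (M x)ᵀ = M x := hMsymm x
    have hdnn : ∀ u : Fin n → ℝ, (0:ℝ) ≤ u ⬝ᵥ u :=
      fun u => Finset.sum_nonneg fun i _ => mul_self_nonneg _
    have hMker : ∀ u : Fin n → ℝ, M x *ᵥ u = 0 → u = 0 := by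
      intro u hu
      have h1 := (hbound x u).1
      rw [hu, dotProduct_zero] at h1
      have h2 : u ⬝ᵥ u = 0 := le_antisymm (by nlinarith [hdnn u]) (hdnn u)
      exact dotProduct_self_eq_zero.mp h2
    have hPker : ∀ u : Fin m → ℝ, Px *ᵥ u = 0 → u = 0 := by
      intro u hu
      rw [hPx, ← Matrix.mulVec_mulVec] at hu
      have h3 := hMker _ hu
      exact hBrank x (by rw [h3, Matrix.mulVec_zero])
    have hdotPt : ∀ (u : Fin m → ℝ) (w : Fin n → ℝ), u ⬝ᵥ (Pxᵀ *ᵥ w) = (Px *ᵥ u) ⬝ᵥ w := by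
      intro u w
      rw [Matrix.dotProduct_mulVec, Matrix.vecMul_transpose]
    have hGdet : IsUnit (Pxᵀ * Px).det := by
      rw [← Matrix.isUnit_iff_isUnit_det, ← Matrix.mulVec_injective_iff_isUnit]
      have hker : ∀ u, (Pxᵀ * Px) *ᵥ u = 0 → u = 0 := by
        intro u hu
        have h1 : u ⬝ᵥ ((Pxᵀ * Px) *ᵥ u) = 0 := by rw [hu, dotProduct_zero]
        rw [← Matrix.mulVec_mulVec, hdotPt] at h1
        exact hPker u (dotProduct_self_eq_zero.mp h1)
      intro u u' huu
      have h2 : (Pxᵀ * Px) *ᵥ (u - u') = 0 := by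
        rw [Matrix.mulVec_sub]
        rw [show (Pxᵀ * Px) *ᵥ u = (Pxᵀ * Px) *ᵥ u' from huu, sub_self]
      exact sub_eq_zero.mp (hker _ h2)
    obtain ⟨h1, h2, h3⟩ := projection_props Px hGdet
    set w : Fin n → ℝ := Pix *ᵥ v with hw
    set z : Fin n → ℝ := v - w with hz
    have hv : w + z = v := by rw [hz]; ring
    have hwdot : w ⬝ᵥ w = v ⬝ᵥ (Pix *ᵥ v) := by
      rw [hw, Matrix.dotProduct_mulVec, ← Matrix.mulVec_transpose,
        Matrix.mulVec_mulVec, hPix, h3, ← hPix, h2, dotProduct_comm]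
    have hPz : Pxᵀ *ᵥ z = 0 := by
      rw [hz, Matrix.mulVec_sub, hw, Matrix.mulVec_mulVec, hPix, h1, sub_self]
    have hBz : (B x)ᵀ *ᵥ (M x *ᵥ z) = 0 := by
      have hPT : Pxᵀ = (B x)ᵀ * M x := by rw [hPx, Matrix.transpose_mul, hMT]
      rw [Matrix.mulVec_mulVec, ← hPT, hPz]
    set D : ℝ := Cs x with hD
    have hD0 : 0 ≤ D := hCnn x
    have hDsum : D = ∑ i, ∑ j, |U x i j| := by rw [hD, hCs]
    clear_value w z Px Pix D
    have hUd : ∀ u u' : Fin n → ℝ, u ⬝ᵥ (U x *ᵥ u')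
        = u ⬝ᵥ ((fderiv ℝ M x (f x) + (jacM f x)ᵀ * M x + M x * jacM f x) *ᵥ u')
          + (lam / 2) * (u ⬝ᵥ (M x *ᵥ u')) := by
      intro u u'
      rw [hUdef]
      simp only [Matrix.add_mulVec, dotProduct_add, Matrix.smul_mulVec,
        dotProduct_smul, smul_eq_mul]
    -- the four pieces
    have I1 : w ⬝ᵥ (U x *ᵥ w) ≤ D * (w ⬝ᵥ w) := by
      have := dot_mulVec_bound (U x) w w 1 one_pos
      rw [← hDsum] at this
      norm_num at this
      linarith
    have ht₁ : (0:ℝ) < c / (D + 1) := div_pos hcpos (by linarith)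
    have ht₂ : (0:ℝ) < (D + 1) / c := div_pos (by linarith) hcpos
    have hDt₁ : D * (c / (D + 1)) ≤ c := by
      rw [← mul_div_assoc, div_le_iff₀ (show (0:ℝ) < D + 1 by linarith)]
      nlinarith
    have hDt₂ : D / (2 * ((D + 1) / c)) ≤ c / 2 := by
      rw [div_le_div_iff₀ (by positivity) two_pos]
      have hcc : c * (2 * ((D + 1) / c)) = 2 * (D + 1) := by
        rw [mul_left_comm, mul_comm c, div_mul_cancel₀ _ (ne_of_gt hcpos)]
      rw [hcc]
      linarith
    have I2 : w ⬝ᵥ (U x *ᵥ z) ≤ D * (D + 1) / (2 * c) * (w ⬝ᵥ w) + c / 2 * (z ⬝ᵥ z) := by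
      have hb := dot_mulVec_bound (U x) w z (c / (D + 1)) ht₁
      rw [← hDsum] at hb
      have e1 : D / (2 * (c / (D + 1))) = D * (D + 1) / (2 * c) := by
        rw [← mul_div_assoc, div_div_eq_mul_div]
      rw [e1] at hb
      have m2 : D * (c / (D + 1)) / 2 * (z ⬝ᵥ z) ≤ c / 2 * (z ⬝ᵥ z) :=
        mul_le_mul_of_nonneg_right (by linarith) (hdnn z)
      linarith
    have I3 : z ⬝ᵥ (U x *ᵥ w) ≤ D * (D + 1) / (2 * c) * (w ⬝ᵥ w) + c / 2 * (z ⬝ᵥ z) := by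
      have hb := dot_mulVec_bound (U x) z w ((D + 1) / c) ht₂
      rw [← hDsum] at hb
      have e1 : D * ((D + 1) / c) / 2 = D * (D + 1) / (2 * c) := by
        rw [← mul_div_assoc, div_div, mul_comm c 2]
      rw [e1] at hb
      have m3 : D / (2 * ((D + 1) / c)) * (z ⬝ᵥ z) ≤ c / 2 * (z ⬝ᵥ z) :=
        mul_le_mul_of_nonneg_right hDt₂ (hdnn z)
      linarith
    have I4 : z ⬝ᵥ (U x *ᵥ z) ≤ -c * (z ⬝ᵥ z) := by
      rw [hUd z z]
      by_cases hz0 : z = 0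
      · rw [hz0]
        simp
      · have hq := hC1 x z hz0 hBz
        have hb1 := (hbound x z).1
        have h5 : lam / 2 * (p₁ * (z ⬝ᵥ z)) ≤ lam / 2 * (z ⬝ᵥ (M x *ᵥ z)) :=
          mul_le_mul_of_nonneg_left hb1 (by linarith)
        rw [hc]
        linarith [hq, h5]
    have hexpand : v ⬝ᵥ (U x *ᵥ v)
        = w ⬝ᵥ (U x *ᵥ w) + w ⬝ᵥ (U x *ᵥ z) + z ⬝ᵥ (U x *ᵥ w) + z ⬝ᵥ (U x *ᵥ z) := by
      conv_lhs => rw [← hv]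
      simp only [Matrix.mulVec_add, dotProduct_add, add_dotProduct]
      ring
    have hsplitv := hUd v v
    have hgoal : v ⬝ᵥ (U x *ᵥ v) ≤ (D + D * (D + 1) / c) * (w ⬝ᵥ w) := by
      rw [hexpand]
      calc w ⬝ᵥ (U x *ᵥ w) + w ⬝ᵥ (U x *ᵥ z) + z ⬝ᵥ (U x *ᵥ w) + z ⬝ᵥ (U x *ᵥ z)
          ≤ D * (w ⬝ᵥ w) + (D * (D + 1) / (2 * c) * (w ⬝ᵥ w) + c / 2 * (z ⬝ᵥ z))
            + (D * (D + 1) / (2 * c) * (w ⬝ᵥ w) + c / 2 * (z ⬝ᵥ z)) + (-c * (z ⬝ᵥ z)) :=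
            add_le_add (add_le_add (add_le_add I1 I2) I3) I4
        _ = (D + D * (D + 1) / c) * (w ⬝ᵥ w) := by ring
    have hvw : v ⬝ᵥ w = w ⬝ᵥ w := by rw [hwdot, hw]
    rw [hvw]
    linarith [hgoal, hsplitv]
end

section
/- Let f : ℝⁿ → ℝⁿ and B : ℝⁿ → ℝ^{n×m} be continuously differentiable, let M : ℝⁿ → ℝ^{n×n} be a continuously differentiable symmetric-matrix-valued map satisfying condition (PDE), let K : ℝⁿ → ℝ^{m×n} be continuous and λ₀ > 0 be such that for all x and v ∈ ℝⁿ: vᵀ(∂_f M(x) + Df(x)ᵀ M(x) + M(x) Df(x) + K(x)ᵀ B(x)ᵀ M(x) + M(x) B(x) K(x)) v ≤ −λ₀ vᵀ M(x) v. Let α : ℝⁿ → ℝᵐ be differentiable with Dα(x) = K(x) for all x, let c ∈ ℝᵐ be a constant vector, and define the closed-loop vector field F(x) := f(x) + B(x)(α(x) + c). Then for all x and v ∈ ℝⁿ: vᵀ(∂_F M(x) + DF(x)ᵀ M(x) + M(x) DF(x)) v ≤ −λ₀ vᵀ M(x) v. -/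
/- STATEMENT 10: if M satisfies condition (PDE) and the differential gain K
achieves contraction rate λ₀ in the metric M, then the closed-loop vector field
F = f + B(α + c), with Dα = K and constant offset c, contracts at rate λ₀. -/

open Matrix

attribute [local instance] Matrix.normedAddCommGroup Matrix.normedSpace

private lemma fderiv_pi_apply {ι κ : Type*} [Fintype ι] [Fintype κ]
    {g : (ι → ℝ) → (κ → ℝ)} {x : ι → ℝ} (h : DifferentiableAt ℝ g x) (e : ι → ℝ) (k : κ) :
    fderiv ℝ g x e k = fderiv ℝ (fun y => g y k) x e := by
  rw [fderiv_pi (fun k => (differentiableAt_pi.1 h k))]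
  rfl

theorem stmt10 {n m : ℕ}
    (f : (Fin n → ℝ) → (Fin n → ℝ)) (hf : ContDiff ℝ 1 f)
    (B : (Fin n → ℝ) → Matrix (Fin n) (Fin m) ℝ) (hB : ContDiff ℝ 1 B)
    (M : (Fin n → ℝ) → Matrix (Fin n) (Fin n) ℝ) (hM : ContDiff ℝ 1 M)
    (hMsymm : ∀ x, (M x).IsSymm)
    -- condition (PDE)
    (hPDE : ∀ (i : Fin m) (x : Fin n → ℝ),
      fderiv ℝ M x (fun k => B x k i)
        + (jacM (fun y k => B y k i) x)ᵀ * M x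
        + M x * jacM (fun y k => B y k i) x = 0)
    (K : (Fin n → ℝ) → Matrix (Fin m) (Fin n) ℝ) (hK : Continuous K)
    (lam₀ : ℝ) (hlam₀ : 0 < lam₀)
    (hKcontr : ∀ (x v : Fin n → ℝ),
      v ⬝ᵥ ((fderiv ℝ M x (f x) + (jacM f x)ᵀ * M x + M x * jacM f x
            + (K x)ᵀ * (B x)ᵀ * M x + M x * B x * K x) *ᵥ v)
        ≤ -lam₀ * (v ⬝ᵥ (M x *ᵥ v)))
    (α : (Fin n → ℝ) → (Fin m → ℝ)) (hα : Differentiable ℝ α)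
    (hαK : ∀ x, jacM α x = K x)
    (c : Fin m → ℝ)
    (F : (Fin n → ℝ) → (Fin n → ℝ)) (hF : F = fun x => f x + B x *ᵥ (α x + c)) :
    ∀ (x v : Fin n → ℝ),
      v ⬝ᵥ ((fderiv ℝ M x (F x) + (jacM F x)ᵀ * M x + M x * jacM F x) *ᵥ v)
        ≤ -lam₀ * (v ⬝ᵥ (M x *ᵥ v)) := by
  intro x v
  -- basic differentiability facts
  have hfd : DifferentiableAt ℝ f x := (hf.differentiable one_ne_zero) x
  have hBd : DifferentiableAt ℝ B x := (hB.differentiable one_ne_zero) x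
  have hfe : ∀ k, DifferentiableAt ℝ (fun y => f y k) x :=
    fun k => differentiableAt_pi.1 hfd k
  have hBe : ∀ k i, DifferentiableAt ℝ (fun y => B y k i) x :=
    fun k i => differentiableAt_pi.1 (differentiableAt_pi.1 hBd k) i
  have hαe : ∀ i, DifferentiableAt ℝ (fun y => α y i) x :=
    fun i => differentiableAt_pi.1 (hα x) i
  have hBce : ∀ i : Fin m, DifferentiableAt ℝ (fun y (k : Fin n) => B y k i) x :=
    fun i => differentiableAt_pi.2 fun k => hBe k i
  -- componentwise derivative of F
  have hFk : ∀ k : Fin n, HasFDerivAt (fun y => F y k)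
      (fderiv ℝ (fun y => f y k) x
        + ∑ i : Fin m, (B x k i • fderiv ℝ (fun y => α y i) x
            + (fderiv ℝ (fun y => B y k i) x).smulRight (α x i + c i))) x := by
    intro k
    have h1 : HasFDerivAt (fun y => f y k) (fderiv ℝ (fun y => f y k) x) x :=
      (hfe k).hasFDerivAt
    have h2 : ∀ i : Fin m, HasFDerivAt (fun y => B y k i * (α y i + c i))
        (B x k i • fderiv ℝ (fun y => α y i) x
          + (fderiv ℝ (fun y => B y k i) x).smulRight (α x i + c i)) x := by
      intro i
      have hd : HasFDerivAt (fun y => α y i + c i) (fderiv ℝ (fun y => α y i) x) x :=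
        (hαe i).hasFDerivAt.add_const (c i)
      exact (hBe k i).hasFDerivAt.mul' hd
    have h3 := h1.add (HasFDerivAt.sum (u := Finset.univ) (fun i _ => h2 i))
    have : (fun y => F y k) = fun y => f y k + ∑ i : Fin m, B y k i * (α y i + c i) := by
      funext y
      simp [hF, Matrix.mulVec, dotProduct]
    rw [this]
    exact h3.congr_of_eventuallyEq (Filter.Eventually.of_forall fun y => by simp [Finset.sum_apply])
  have hFe : ∀ k, DifferentiableAt ℝ (fun y => F y k) x :=
    fun k => (hFk k).differentiableAt
  have hFd : DifferentiableAt ℝ F x := differentiableAt_pi.2 hFe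
  -- decomposition of F x
  have hFx : F x = f x + ∑ i : Fin m, (α x i + c i) • (fun k => B x k i) := by
    rw [hF]
    funext k
    simp [Matrix.mulVec, dotProduct, Finset.sum_apply, mul_comm]
  -- decomposition of the Jacobian of F
  have hjac : jacM F x = jacM f x
      + (∑ i : Fin m, (α x i + c i) • jacM (fun y k => B y k i) x) + B x * K x := by
    ext k j
    have e1 : jacM F x k j = fderiv ℝ (fun y => F y k) x (Pi.single j 1) := by
      simp only [jacM, Matrix.of_apply]
      exact fderiv_pi_apply hFd _ k
    rw [e1, (hFk k).fderiv]
    simp only [ContinuousLinearMap.add_apply, ContinuousLinearMap.coe_sum',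
      Finset.sum_apply, ContinuousLinearMap.smul_apply, ContinuousLinearMap.smulRight_apply, smul_eq_mul]
    have eα : ∀ i : Fin m, fderiv ℝ (fun y => α y i) x (Pi.single j 1) = K x i j := by
      intro i
      rw [← hαK x]
      simp only [jacM, Matrix.of_apply]
      rw [fderiv_pi_apply (hα x) _ i]
    have eB : ∀ i : Fin m, fderiv ℝ (fun y => B y k i) x (Pi.single j 1)
        = jacM (fun y (k : Fin n) => B y k i) x k j := by
      intro i
      simp only [jacM, Matrix.of_apply]
      rw [fderiv_pi_apply (hBce i) _ k]
    have ef : fderiv ℝ (fun y => f y k) x (Pi.single j 1) = jacM f x k j := by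
      simp only [jacM, Matrix.of_apply]
      rw [fderiv_pi_apply hfd _ k]
    simp only [eα, eB, ef]
    simp only [Matrix.add_apply, Matrix.sum_apply, Matrix.smul_apply, smul_eq_mul,
      Matrix.mul_apply]
    rw [Finset.sum_add_distrib]
    have hc := fun i : Fin m => mul_comm (α x i + c i) (jacM (fun y k => B y k i) x k j)
    simp only [hc]
    ring
  -- decomposition of the directional derivative of M
  have hDM : fderiv ℝ M x (F x) = fderiv ℝ M x (f x)
      + ∑ i : Fin m, (α x i + c i) • fderiv ℝ M x (fun k => B x k i) := by
    rw [hFx, map_add, map_sum]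
    simp only [_root_.map_smul]
  -- the key matrix identity
  have key : fderiv ℝ M x (F x) + (jacM F x)ᵀ * M x + M x * jacM F x
      = (fderiv ℝ M x (f x) + (jacM f x)ᵀ * M x + M x * jacM f x
          + (K x)ᵀ * (B x)ᵀ * M x + M x * B x * K x)
        + ∑ i : Fin m, (α x i + c i) •
            (fderiv ℝ M x (fun k => B x k i)
              + (jacM (fun y k => B y k i) x)ᵀ * M x
              + M x * jacM (fun y k => B y k i) x) := by
    rw [hjac, hDM]
    simp only [Matrix.transpose_add, Matrix.transpose_sum, Matrix.transpose_smul,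
      Matrix.transpose_mul, Matrix.add_mul, Matrix.mul_add, Finset.sum_mul,
      Matrix.mul_sum, Matrix.smul_mul, Matrix.mul_smul, smul_add,
      Finset.sum_add_distrib, Matrix.mul_assoc]
    abel
  rw [key]
  simp only [hPDE, smul_zero, Finset.sum_const_zero, add_zero]
  exact hKcontr x v
end

section
/- Let F : ℝⁿ → ℝⁿ be continuously differentiable and let M : ℝⁿ → ℝ^{n×n} be a continuously differentiable symmetric-matrix-valued map with p̲ I ⪯ M(x) ⪯ p̄ I for all x (p̄ ≥ p̲ > 0), and suppose there is λ₀ > 0 such that for all x and v ∈ ℝⁿ: vᵀ(∂_F M(x) + DF(x)ᵀ M(x) + M(x) DF(x)) v ≤ −λ₀ vᵀ M(x) v. Let x : [0,∞) → ℝⁿ be differentiable with x′(t) = F(x(t)) and let δ : [0,∞) → ℝⁿ be differentiable with δ′(t) = DF(x(t)) δ(t) for all t ≥ 0. Then δ(t)ᵀ M(x(t)) δ(t) ≤ e^{−λ₀ t} · δ(0)ᵀ M(x(0)) δ(0) for all t ≥ 0, and consequently ‖δ(t)‖ ≤ √(p̄/p̲) · e^{−λ₀ t / 2} · ‖δ(0)‖.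 -/
/- STATEMENT 11: a closed-loop contraction condition in the metric M implies
exponential decay of solutions of the variational dynamics δ̇ = DF(x(t))δ.
`Real.sqrt (v ⬝ᵥ v)` is the Euclidean norm of v. -/

open Matrix

attribute [local instance] Matrix.normedAddCommGroup Matrix.normedSpace

theorem stmt11 {n : ℕ}
    (F : (Fin n → ℝ) → (Fin n → ℝ)) (hF : ContDiff ℝ 1 F)
    (M : (Fin n → ℝ) → Matrix (Fin n) (Fin n) ℝ) (hM : ContDiff ℝ 1 M)
    (hMsymm : ∀ x, (M x).IsSymm)
    (p₁ p₂ : ℝ) (hp₁ : 0 < p₁) (hp₁₂ : p₁ ≤ p₂)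
    (hbound : ∀ (x v : Fin n → ℝ), p₁ * (v ⬝ᵥ v) ≤ v ⬝ᵥ (M x *ᵥ v) ∧
        v ⬝ᵥ (M x *ᵥ v) ≤ p₂ * (v ⬝ᵥ v))
    (lam₀ : ℝ) (hlam₀ : 0 < lam₀)
    (hcontr : ∀ (x v : Fin n → ℝ),
      v ⬝ᵥ ((fderiv ℝ M x (F x) + (jacM F x)ᵀ * M x + M x * jacM F x) *ᵥ v)
        ≤ -lam₀ * (v ⬝ᵥ (M x *ᵥ v)))
    (x δ : ℝ → (Fin n → ℝ))
    (hx : ∀ t, 0 ≤ t → HasDerivAt x (F (x t)) t)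
    (hδ : ∀ t, 0 ≤ t → HasDerivAt δ (jacM F (x t) *ᵥ δ t) t) :
    ∀ t, 0 ≤ t →
      δ t ⬝ᵥ (M (x t) *ᵥ δ t) ≤ Real.exp (-lam₀ * t) * (δ 0 ⬝ᵥ (M (x 0) *ᵥ δ 0)) ∧
      Real.sqrt (δ t ⬝ᵥ δ t)
        ≤ Real.sqrt (p₂ / p₁) * Real.exp (-(lam₀ * t) / 2) * Real.sqrt (δ 0 ⬝ᵥ δ 0) := by
  set V : ℝ → ℝ := fun t => δ t ⬝ᵥ (M (x t) *ᵥ δ t) with hVdef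
  set W : ℝ → ℝ := fun t =>
    δ t ⬝ᵥ ((fderiv ℝ M (x t) (F (x t)) + (jacM F (x t))ᵀ * M (x t)
      + M (x t) * jacM F (x t)) *ᵥ δ t) with hWdef
  have hderiv : ∀ t, 0 ≤ t → HasDerivAt V (W t) t := by
    intro t ht
    have hMd : HasDerivAt (fun s => M (x s)) (fderiv ℝ M (x t) (F (x t))) t :=
      ((hM.differentiable one_ne_zero) (x t)).hasFDerivAt.comp_hasDerivAt t (hx t ht)
    have hMij : ∀ i j, HasDerivAt (fun s => M (x s) i j)
        (fderiv ℝ M (x t) (F (x t)) i j) t :=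
      fun i j => hasDerivAt_pi.1 (hasDerivAt_pi.1 hMd i) j
    have hδi : ∀ i, HasDerivAt (fun s => δ s i) ((jacM F (x t) *ᵥ δ t) i) t :=
      fun i => hasDerivAt_pi.1 (hδ t ht) i
    have hsum : HasDerivAt (fun s => ∑ i, ∑ j, δ s i * (M (x s) i j * δ s j))
        (∑ i, ∑ j, ((jacM F (x t) *ᵥ δ t) i * (M (x t) i j * δ t j)
          + δ t i * (fderiv ℝ M (x t) (F (x t)) i j * δ t j
            + M (x t) i j * ((jacM F (x t) *ᵥ δ t) j)))) t := by
      apply HasDerivAt.fun_sum; intro i _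
      apply HasDerivAt.fun_sum; intro j _
      exact (hδi i).mul ((hMij i j).mul (hδi j))
    have hVeq : V = fun s => ∑ i, ∑ j, δ s i * (M (x s) i j * δ s j) := by
      funext s
      simp [hVdef, dotProduct, mulVec, Finset.mul_sum]
    have hWeq : W t = ∑ i, ∑ j, ((jacM F (x t) *ᵥ δ t) i * (M (x t) i j * δ t j)
          + δ t i * (fderiv ℝ M (x t) (F (x t)) i j * δ t j
            + M (x t) i j * ((jacM F (x t) *ᵥ δ t) j))) := by
      have h1 : W t = (jacM F (x t) *ᵥ δ t) ⬝ᵥ (M (x t) *ᵥ δ t)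
          + δ t ⬝ᵥ (fderiv ℝ M (x t) (F (x t)) *ᵥ δ t)
          + δ t ⬝ᵥ (M (x t) *ᵥ (jacM F (x t) *ᵥ δ t)) := by
        rw [hWdef]
        simp only [Matrix.add_mulVec, dotProduct_add, ← Matrix.mulVec_mulVec]
        rw [Matrix.dotProduct_mulVec (δ t) (jacM F (x t))ᵀ, Matrix.vecMul_transpose]
        ring
      rw [h1]
      simp only [dotProduct, mulVec, Finset.mul_sum, Finset.sum_add_distrib, mul_add]
      ring_nf
    rw [hVeq, hWeq]
    exact hsum
  have key : ∀ T, 0 ≤ T → V T ≤ V 0 * Real.exp (-lam₀ * T) := by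
    intro T hT
    have := le_gronwallBound_of_liminf_deriv_right_le (f := V) (f' := W)
      (δ := V 0) (K := -lam₀) (ε := 0) (a := 0) (b := T)
      (fun s hs => ((hderiv s hs.1).continuousAt).continuousWithinAt)
      (fun s hs r hr => ((hderiv s hs.1).hasDerivWithinAt).liminf_right_slope_le hr)
      le_rfl
      (fun s hs => by
        have := hcontr (x s) (δ s)
        simp only [hWdef, hVdef, add_zero]
        linarith)
      T (Set.mem_Icc.2 ⟨hT, le_rfl⟩)
    simpa [gronwallBound_ε0] using this
  intro t ht
  have part1 : V t ≤ Real.exp (-lam₀ * t) * V 0 := by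
    rw [mul_comm]; exact key t ht
  refine ⟨part1, ?_⟩
  have hp₂ : 0 < p₂ := hp₁.trans_le hp₁₂
  have h0 : (0:ℝ) ≤ δ 0 ⬝ᵥ δ 0 :=
    Finset.sum_nonneg fun i _ => mul_self_nonneg _
  have h1 := (hbound (x t) (δ t)).1
  have h2 := (hbound (x 0) (δ 0)).2
  have hdt : δ t ⬝ᵥ δ t ≤ p₂ / p₁ * Real.exp (-lam₀ * t) * (δ 0 ⬝ᵥ δ 0) := by
    have h3 : p₁ * (δ t ⬝ᵥ δ t) ≤ Real.exp (-lam₀ * t) * (p₂ * (δ 0 ⬝ᵥ δ 0)) := by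
      refine le_trans h1 (le_trans part1 ?_)
      exact mul_le_mul_of_nonneg_left h2 (Real.exp_nonneg _)
    have h4 : δ t ⬝ᵥ δ t ≤ (Real.exp (-lam₀ * t) * (p₂ * (δ 0 ⬝ᵥ δ 0))) / p₁ := by
      rw [le_div_iff₀ hp₁, mul_comm]; exact h3
    calc δ t ⬝ᵥ δ t ≤ (Real.exp (-lam₀ * t) * (p₂ * (δ 0 ⬝ᵥ δ 0))) / p₁ := h4
      _ = p₂ / p₁ * Real.exp (-lam₀ * t) * (δ 0 ⬝ᵥ δ 0) := by ring
  calc Real.sqrt (δ t ⬝ᵥ δ t)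
      ≤ Real.sqrt (p₂ / p₁ * Real.exp (-lam₀ * t) * (δ 0 ⬝ᵥ δ 0)) := Real.sqrt_le_sqrt hdt
    _ = Real.sqrt (p₂ / p₁) * Real.exp (-(lam₀ * t) / 2) * Real.sqrt (δ 0 ⬝ᵥ δ 0) := by
        have hexp : Real.exp (-lam₀ * t)
            = Real.exp (-(lam₀ * t) / 2) * Real.exp (-(lam₀ * t) / 2) := by
          rw [← Real.exp_add]; ring_nf
        rw [Real.sqrt_mul (by positivity), Real.sqrt_mul (by positivity), hexp,
          Real.sqrt_mul_self (Real.exp_nonneg _)]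
end

section
/- Let A, D : [0,∞) → ℝ^{n×n} be continuous, let M : [0,∞) → ℝ^{n×n} be a continuously differentiable symmetric-matrix-valued map with p̲ I ⪯ M(t) ⪯ p̄ I for all t ≥ 0 (p̄ ≥ p̲ > 0), and suppose there are constants λ₀ > 0, C ≥ 0, a > 0 such that for all t ≥ 0: (i) M′(t) + A(t)ᵀ M(t) + M(t) A(t) ⪯ −λ₀ M(t), and (ii) the operator norm of D(t) satisfies ‖D(t)‖ ≤ C e^{−a t}. Then every differentiable δ : [0,∞) → ℝⁿ with δ′(t) = (A(t) + D(t)) δ(t) satisfies ‖δ(t)‖ ≤ √(p̄/p̲) · e^{C p̄ /(p̲ a)} · e^{−λ₀ t / 2} · ‖δ(0)‖ for all t ≥ 0. -/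
/- STATEMENT 12: an LTV system δ̇ = (A(t) + D(t))δ that contracts at rate λ₀ in
a time-varying metric M(t) (p̲I ⪯ M ⪯ p̄I) when the exponentially decaying
perturbation D (operator-norm bound ‖D(t)v‖ ≤ C e^{−at}‖v‖ in the Euclidean
norm, written with `Real.sqrt (v ⬝ᵥ v)`) is absent, still decays exponentially. -/

open Matrix

attribute [local instance] Matrix.normedAddCommGroup Matrix.normedSpace

private lemma stmt12_entry_deriv {n : ℕ} {M : ℝ → Matrix (Fin n) (Fin n) ℝ}
    {Mt : Matrix (Fin n) (Fin n) ℝ} {t : ℝ}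
    (h : HasDerivAt M Mt t) (i j : Fin n) :
    HasDerivAt (fun s => M s i j) (Mt i j) t :=
  (LinearMap.toContinuousLinearMap (Matrix.entryLinearMap ℝ ℝ i j)).hasFDerivAt.comp_hasDerivAt t h

private lemma stmt12_comp_deriv {n : ℕ} {δ : ℝ → Fin n → ℝ} {v : Fin n → ℝ} {t : ℝ}
    (h : HasDerivAt δ v t) (i : Fin n) :
    HasDerivAt (fun s => δ s i) (v i) t :=
  (ContinuousLinearMap.proj (R := ℝ) (φ := fun _ : Fin n => ℝ) i).hasFDerivAt.comp_hasDerivAt t h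

private lemma stmt12_quad_deriv {n : ℕ} {M : ℝ → Matrix (Fin n) (Fin n) ℝ} {δ : ℝ → Fin n → ℝ}
    {Mt : Matrix (Fin n) (Fin n) ℝ} {v : Fin n → ℝ} {t : ℝ}
    (hM : HasDerivAt M Mt t) (hδ : HasDerivAt δ v t) :
    HasDerivAt (fun s => δ s ⬝ᵥ (M s *ᵥ δ s))
      (v ⬝ᵥ (M t *ᵥ δ t) + δ t ⬝ᵥ (Mt *ᵥ δ t) + δ t ⬝ᵥ (M t *ᵥ v)) t := by
  have key : ∀ i j : Fin n, HasDerivAt (fun s => δ s i * (M s i j * δ s j))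
      (v i * (M t i j * δ t j) + δ t i * (Mt i j * δ t j) + δ t i * (M t i j * v j)) t := by
    intro i j
    have h1 := (stmt12_comp_deriv hδ i).mul
      ((stmt12_entry_deriv hM i j).mul (stmt12_comp_deriv hδ j))
    refine h1.congr_deriv ?_; simp only [Pi.mul_apply]; ring
  have hsum : HasDerivAt (fun s => ∑ i, ∑ j, δ s i * (M s i j * δ s j))
      (∑ i, ∑ j, (v i * (M t i j * δ t j) + δ t i * (Mt i j * δ t j)
        + δ t i * (M t i j * v j))) t := by
    apply HasDerivAt.fun_sum; intro i _; apply HasDerivAt.fun_sum; intro j _; exact key i j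
  convert hsum using 1
  · funext s; simp [dotProduct, mulVec, Finset.mul_sum]
  · simp [dotProduct, mulVec, Finset.mul_sum, Finset.sum_add_distrib]

private lemma stmt12_dot_swap {n : ℕ} (M : Matrix (Fin n) (Fin n) ℝ) (u w : Fin n → ℝ) :
    u ⬝ᵥ (M *ᵥ w) = w ⬝ᵥ (Mᵀ *ᵥ u) := by
  simp only [dotProduct, mulVec, Matrix.transpose_apply, Finset.mul_sum]
  rw [Finset.sum_comm]
  congr 1; ext i; congr 1; ext j; ring

private lemma stmt12_cs {n : ℕ} {M : Matrix (Fin n) (Fin n) ℝ} (hsymm : M.IsSymm)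
    (hpos : ∀ v : Fin n → ℝ, 0 ≤ v ⬝ᵥ (M *ᵥ v)) (u w : Fin n → ℝ) :
    (u ⬝ᵥ (M *ᵥ w))^2 ≤ (u ⬝ᵥ (M *ᵥ u)) * (w ⬝ᵥ (M *ᵥ w)) := by
  have hswap : w ⬝ᵥ (M *ᵥ u) = u ⬝ᵥ (M *ᵥ w) := by
    rw [stmt12_dot_swap, hsymm.eq]
  have hq : ∀ x : ℝ, 0 ≤ (w ⬝ᵥ (M *ᵥ w)) * (x * x)
      + (2 * (u ⬝ᵥ (M *ᵥ w))) * x + (u ⬝ᵥ (M *ᵥ u)) := by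
    intro x
    have h0 := hpos (u + x • w)
    calc (0:ℝ) ≤ (u + x • w) ⬝ᵥ (M *ᵥ (u + x • w)) := h0
    _ = (w ⬝ᵥ (M *ᵥ w)) * (x * x) + (2 * (u ⬝ᵥ (M *ᵥ w))) * x + (u ⬝ᵥ (M *ᵥ u)) := by
        simp [Matrix.mulVec_add, Matrix.mulVec_smul, dotProduct_add, add_dotProduct,
          dotProduct_smul, smul_dotProduct, smul_eq_mul, hswap]
        ring
  have hd := discrim_le_zero hq
  unfold discrim at hd
  nlinarith [hd]

private lemma stmt12_dot_self_nonneg {n : ℕ} (v : Fin n → ℝ) : 0 ≤ v ⬝ᵥ v := by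
  apply Finset.sum_nonneg; intro i _; exact mul_self_nonneg _

set_option maxHeartbeats 1000000 in
theorem stmt12 {n : ℕ}
    (A D M M' : ℝ → Matrix (Fin n) (Fin n) ℝ)
    (hA : ContinuousOn A (Set.Ici 0)) (hD : ContinuousOn D (Set.Ici 0))
    (hMderiv : ∀ t ∈ Set.Ici (0 : ℝ), HasDerivAt M (M' t) t)
    (hM'cont : ContinuousOn M' (Set.Ici 0))
    (hMsymm : ∀ t, (M t).IsSymm)
    (p₁ p₂ : ℝ) (hp₁ : 0 < p₁) (hp₁₂ : p₁ ≤ p₂)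
    (hbound : ∀ t ∈ Set.Ici (0 : ℝ), ∀ v : Fin n → ℝ,
      p₁ * (v ⬝ᵥ v) ≤ v ⬝ᵥ (M t *ᵥ v) ∧ v ⬝ᵥ (M t *ᵥ v) ≤ p₂ * (v ⬝ᵥ v))
    (lam₀ C a : ℝ) (hlam₀ : 0 < lam₀) (hC : 0 ≤ C) (ha : 0 < a)
    -- (i) contraction of the unperturbed dynamics in the metric M
    (hcontr : ∀ t ∈ Set.Ici (0 : ℝ), ∀ v : Fin n → ℝ,
      v ⬝ᵥ ((M' t + (A t)ᵀ * M t + M t * A t) *ᵥ v) ≤ -lam₀ * (v ⬝ᵥ (M t *ᵥ v)))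
    -- (ii) exponential decay of the perturbation in Euclidean operator norm
    (hDdecay : ∀ t ∈ Set.Ici (0 : ℝ), ∀ v : Fin n → ℝ,
      Real.sqrt ((D t *ᵥ v) ⬝ᵥ (D t *ᵥ v)) ≤ C * Real.exp (-a * t) * Real.sqrt (v ⬝ᵥ v)) :
    ∀ δ : ℝ → (Fin n → ℝ),
      (∀ t ∈ Set.Ici (0 : ℝ), HasDerivAt δ ((A t + D t) *ᵥ δ t) t) →
      ∀ t ∈ Set.Ici (0 : ℝ),
        Real.sqrt (δ t ⬝ᵥ δ t)
          ≤ Real.sqrt (p₂ / p₁) * Real.exp (C * p₂ / (p₁ * a))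
            * Real.exp (-lam₀ * t / 2) * Real.sqrt (δ 0 ⬝ᵥ δ 0) := by
  intro δ hδ t ht
  set r : ℝ := Real.sqrt (p₂ / p₁) with hr_def
  have hr_nonneg : 0 ≤ r := Real.sqrt_nonneg _
  have hr_sq : r ^ 2 = p₂ / p₁ :=
    Real.sq_sqrt (div_nonneg (le_of_lt (lt_of_lt_of_le hp₁ hp₁₂)) (le_of_lt hp₁))
  set k : ℝ := 2 * C * r with hk_def
  have hk_nonneg : 0 ≤ k := by positivity
  set V : ℝ → ℝ := fun s => δ s ⬝ᵥ (M s *ᵥ δ s) with hV_def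
  set V' : ℝ → ℝ := fun s =>
    ((A s + D s) *ᵥ δ s) ⬝ᵥ (M s *ᵥ δ s) + δ s ⬝ᵥ (M' s *ᵥ δ s)
      + δ s ⬝ᵥ (M s *ᵥ ((A s + D s) *ᵥ δ s)) with hV'_def
  have hVderiv : ∀ s ∈ Set.Ici (0:ℝ), HasDerivAt V (V' s) s := fun s hs =>
    stmt12_quad_deriv (hMderiv s hs) (hδ s hs)
  -- positivity facts
  have hVpos : ∀ s ∈ Set.Ici (0:ℝ), 0 ≤ V s := by
    intro s hs
    have h1 := (hbound s hs (δ s)).1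
    have h2 := stmt12_dot_self_nonneg (δ s)
    show 0 ≤ δ s ⬝ᵥ (M s *ᵥ δ s)
    nlinarith
  have hMpsd : ∀ s ∈ Set.Ici (0:ℝ), ∀ v : Fin n → ℝ, 0 ≤ v ⬝ᵥ (M s *ᵥ v) := by
    intro s hs v
    have h1 := (hbound s hs v).1
    have h2 := stmt12_dot_self_nonneg v
    nlinarith
  -- differential inequality for V
  have hVle : ∀ s ∈ Set.Ici (0:ℝ), V' s ≤ (-lam₀ + k * Real.exp (-a * s)) * V s := by
    intro s hs
    have hVs : V s = δ s ⬝ᵥ (M s *ᵥ δ s) := rfl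
    set u := δ s with hu_def
    have e1 : ((A s + D s) *ᵥ u) ⬝ᵥ (M s *ᵥ u) = u ⬝ᵥ (M s *ᵥ ((A s + D s) *ᵥ u)) := by
      rw [stmt12_dot_swap (M s) u ((A s + D s) *ᵥ u), (hMsymm s).eq]
    have e2 : u ⬝ᵥ (((A s)ᵀ * M s) *ᵥ u) = u ⬝ᵥ (M s *ᵥ (A s *ᵥ u)) := by
      rw [← Matrix.mulVec_mulVec, stmt12_dot_swap ((A s)ᵀ) u (M s *ᵥ u),
        Matrix.transpose_transpose, stmt12_dot_swap (M s) u (A s *ᵥ u), (hMsymm s).eq]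
      exact dotProduct_comm _ _
    have e3 : u ⬝ᵥ ((M s * A s) *ᵥ u) = u ⬝ᵥ (M s *ᵥ (A s *ᵥ u)) := by
      rw [← Matrix.mulVec_mulVec]
    set cterm : ℝ := u ⬝ᵥ (M s *ᵥ (D s *ᵥ u)) with hcterm_def
    have expand : u ⬝ᵥ (M s *ᵥ ((A s + D s) *ᵥ u)) = u ⬝ᵥ (M s *ᵥ (A s *ᵥ u)) + cterm := by
      rw [Matrix.add_mulVec, Matrix.mulVec_add, dotProduct_add]
    have hsplit : u ⬝ᵥ ((M' s + (A s)ᵀ * M s + M s * A s) *ᵥ u)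
        = u ⬝ᵥ (M' s *ᵥ u) + 2 * (u ⬝ᵥ (M s *ᵥ (A s *ᵥ u))) := by
      rw [Matrix.add_mulVec, Matrix.add_mulVec, dotProduct_add, dotProduct_add, e2, e3]
      ring
    have hVeq : V' s = u ⬝ᵥ ((M' s + (A s)ᵀ * M s + M s * A s) *ᵥ u) + 2 * cterm := by
      have : V' s = ((A s + D s) *ᵥ u) ⬝ᵥ (M s *ᵥ u) + u ⬝ᵥ (M' s *ᵥ u)
          + u ⬝ᵥ (M s *ᵥ ((A s + D s) *ᵥ u)) := rfl
      rw [this, e1, expand, hsplit]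
      ring
    have hcontr' := hcontr s hs u
    -- bound the cross-term
    set ex : ℝ := Real.exp (-a * s) with hex_def
    have hex_pos : 0 < ex := Real.exp_pos _
    have hDd := hDdecay s hs u
    have hDuDu : 0 ≤ (D s *ᵥ u) ⬝ᵥ (D s *ᵥ u) := stmt12_dot_self_nonneg _
    have huu : 0 ≤ u ⬝ᵥ u := stmt12_dot_self_nonneg u
    have hDsq : (D s *ᵥ u) ⬝ᵥ (D s *ᵥ u) ≤ (C * ex)^2 * (u ⬝ᵥ u) := by
      have h1 : Real.sqrt ((D s *ᵥ u) ⬝ᵥ (D s *ᵥ u)) ^ 2 = (D s *ᵥ u) ⬝ᵥ (D s *ᵥ u) :=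
        Real.sq_sqrt hDuDu
      have h2 : Real.sqrt (u ⬝ᵥ u) ^ 2 = u ⬝ᵥ u := Real.sq_sqrt huu
      have h3 : (0:ℝ) ≤ Real.sqrt ((D s *ᵥ u) ⬝ᵥ (D s *ᵥ u)) := Real.sqrt_nonneg _
      have h4 : (0:ℝ) ≤ Real.sqrt (u ⬝ᵥ u) := Real.sqrt_nonneg _
      have h6 := mul_self_le_mul_self h3 hDd
      nlinarith [h6, h1, h2]
    have hcs := stmt12_cs (hMsymm s) (hMpsd s hs) u (D s *ᵥ u)
    have hMDu := (hbound s hs (D s *ᵥ u)).2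
    have huuV : u ⬝ᵥ u ≤ V s / p₁ := by
      have h5 := (hbound s hs u).1
      rw [hVs, le_div_iff₀ hp₁, mul_comm]
      exact h5
    have hVs_nonneg : 0 ≤ V s := hVpos s hs
    have hp₂pos : 0 < p₂ := lt_of_lt_of_le hp₁ hp₁₂
    have hcterm_sq : cterm ^ 2 ≤ (C * ex * r * V s) ^ 2 := by
      have hb1 : cterm ^ 2 ≤ (u ⬝ᵥ (M s *ᵥ u)) * ((D s *ᵥ u) ⬝ᵥ (M s *ᵥ (D s *ᵥ u))) := hcs
      have hb1' : cterm ^ 2 ≤ V s * ((D s *ᵥ u) ⬝ᵥ (M s *ᵥ (D s *ᵥ u))) := by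
        rw [hVs]; exact hb1
      have hb2 : (D s *ᵥ u) ⬝ᵥ (M s *ᵥ (D s *ᵥ u)) ≤ p₂ * ((C * ex)^2 * (u ⬝ᵥ u)) :=
        le_trans hMDu (mul_le_mul_of_nonneg_left hDsq (le_of_lt hp₂pos))
      have hb3 : p₂ * ((C * ex)^2 * (u ⬝ᵥ u)) ≤ p₂ * ((C * ex)^2 * (V s / p₁)) :=
        mul_le_mul_of_nonneg_left
          (mul_le_mul_of_nonneg_left huuV (sq_nonneg _)) (le_of_lt hp₂pos)
      have step : cterm ^ 2 ≤ V s * (p₂ * ((C * ex)^2 * (V s / p₁))) :=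
        le_trans hb1' (mul_le_mul_of_nonneg_left (le_trans hb2 hb3) hVs_nonneg)
      have heq : V s * (p₂ * ((C * ex)^2 * (V s / p₁))) = (C * ex * r * V s) ^ 2 := by
        rw [show (C * ex * r * V s)^2 = C^2 * ex^2 * r^2 * (V s)^2 by ring, hr_sq]
        field_simp
      linarith [step, heq.le, heq.ge]
    have hcterm_le : cterm ≤ C * ex * r * V s := by
      have hRnn : 0 ≤ C * ex * r * V s := by positivity
      nlinarith [hcterm_sq, hRnn]
    have hfinal : V' s ≤ -lam₀ * V s + 2 * (C * ex * r * V s) := by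
      rw [hVeq]
      have hc : u ⬝ᵥ ((M' s + (A s)ᵀ * M s + M s * A s) *ᵥ u) ≤ -lam₀ * V s := by
        rw [hVs]; exact hcontr'
      linarith
    calc V' s ≤ -lam₀ * V s + 2 * (C * ex * r * V s) := hfinal
      _ = (-lam₀ + k * ex) * V s := by rw [hk_def]; ring
  -- the Lyapunov-type auxiliary function φ
  set g : ℝ → ℝ := fun x => lam₀ * x + (k / a) * Real.exp (-a * x) with hg_def
  have hgderiv : ∀ s : ℝ, HasDerivAt g (lam₀ - k * Real.exp (-a * s)) s := by
    intro s
    have h1 : HasDerivAt (fun x : ℝ => lam₀ * x) lam₀ s := by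
      simpa using (hasDerivAt_id s).const_mul lam₀
    have h2 : HasDerivAt (fun x : ℝ => -a * x) (-a) s := by
      simpa using (hasDerivAt_id s).const_mul (-a)
    have h3 := (h2.exp).const_mul (k / a)
    refine (h1.add h3).congr_deriv ?_
    rw [show k / a * (Real.exp (-a * s) * -a) = -(k * Real.exp (-a * s)) * (a / a) by ring,
      div_self (ne_of_gt ha)]
    ring
  set φ : ℝ → ℝ := fun x => V x * Real.exp (g x) with hφ_def
  have hφderiv : ∀ s ∈ Set.Ici (0:ℝ), HasDerivAt φ
      (V' s * Real.exp (g s) + V s * (Real.exp (g s) * (lam₀ - k * Real.exp (-a * s)))) s := by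
    intro s hs
    exact (hVderiv s hs).mul ((hgderiv s).exp)
  have hφ'le : ∀ s ∈ Set.Ici (0:ℝ),
      V' s * Real.exp (g s) + V s * (Real.exp (g s) * (lam₀ - k * Real.exp (-a * s))) ≤ 0 := by
    intro s hs
    have h1 := hVle s hs
    have h2 : (0:ℝ) < Real.exp (g s) := Real.exp_pos _
    have h3 : V' s + V s * (lam₀ - k * Real.exp (-a * s)) ≤ 0 := by nlinarith
    calc V' s * Real.exp (g s) + V s * (Real.exp (g s) * (lam₀ - k * Real.exp (-a * s)))
        = (V' s + V s * (lam₀ - k * Real.exp (-a * s))) * Real.exp (g s) := by ring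
      _ ≤ 0 := mul_nonpos_of_nonpos_of_nonneg h3 (le_of_lt h2)
  have hanti : AntitoneOn φ (Set.Ici 0) := by
    apply antitoneOn_of_deriv_nonpos (convex_Ici 0)
    · intro s hs
      exact ((hφderiv s hs).continuousAt).continuousWithinAt
    · intro s hs
      rw [interior_Ici] at hs
      exact ((hφderiv s (Set.mem_Ici.2 (le_of_lt hs))).differentiableAt).differentiableWithinAt
    · intro s hs
      rw [interior_Ici] at hs
      rw [(hφderiv s (Set.mem_Ici.2 (le_of_lt hs))).deriv]
      exact hφ'le s (Set.mem_Ici.2 (le_of_lt hs))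
  have hφt : φ t ≤ φ 0 := hanti Set.self_mem_Ici ht ht
  -- unpack : V t ≤ V 0 * exp(k/a) * exp(-lam₀ t)
  have hg0 : g 0 = k / a := by simp [hg_def]
  have hVt_bound : V t * Real.exp (lam₀ * t) ≤ V 0 * Real.exp (k / a) := by
    have h1 : Real.exp (lam₀ * t) ≤ Real.exp (g t) := by
      apply Real.exp_le_exp.2
      have h0 : 0 ≤ (k / a) * Real.exp (-a * t) := by positivity
      simp only [hg_def]; linarith
    have h2 : V t * Real.exp (lam₀ * t) ≤ V t * Real.exp (g t) :=
      mul_le_mul_of_nonneg_left h1 (hVpos t ht)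
    calc V t * Real.exp (lam₀ * t) ≤ V t * Real.exp (g t) := h2
      _ = φ t := rfl
      _ ≤ φ 0 := hφt
      _ = V 0 * Real.exp (k / a) := by rw [hφ_def]; simp only []; rw [hg0]
  have hVt : V t ≤ V 0 * Real.exp (k / a) * Real.exp (-lam₀ * t) := by
    have h5 := mul_le_mul_of_nonneg_right hVt_bound (le_of_lt (Real.exp_pos (-lam₀ * t)))
    calc V t = V t * (Real.exp (lam₀ * t) * Real.exp (-lam₀ * t)) := by
          rw [← Real.exp_add]; simp
      _ = V t * Real.exp (lam₀ * t) * Real.exp (-lam₀ * t) := by ring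
      _ ≤ V 0 * Real.exp (k / a) * Real.exp (-lam₀ * t) := h5
  -- finish
  have h0mem : (0:ℝ) ∈ Set.Ici (0:ℝ) := Set.self_mem_Ici
  have hV0le : V 0 ≤ p₂ * (δ 0 ⬝ᵥ δ 0) := (hbound 0 h0mem (δ 0)).2
  have hδt : p₁ * (δ t ⬝ᵥ δ t) ≤ V t := (hbound t ht (δ t)).1
  have hd0 : 0 ≤ δ 0 ⬝ᵥ δ 0 := stmt12_dot_self_nonneg _
  set R : ℝ := r * Real.exp (C * p₂ / (p₁ * a))
      * Real.exp (-lam₀ * t / 2) * Real.sqrt (δ 0 ⬝ᵥ δ 0) with hR_def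
  have hRnn : 0 ≤ R := by positivity
  have hRsq : R ^ 2 = (p₂ / p₁) * Real.exp (2 * (C * p₂ / (p₁ * a)))
      * Real.exp (-lam₀ * t) * (δ 0 ⬝ᵥ δ 0) := by
    have e2 : Real.sqrt (δ 0 ⬝ᵥ δ 0) ^ 2 = δ 0 ⬝ᵥ δ 0 := Real.sq_sqrt hd0
    have e3 : Real.exp (C * p₂ / (p₁ * a)) ^ 2 = Real.exp (2 * (C * p₂ / (p₁ * a))) := by
      rw [pow_two, ← Real.exp_add]; ring_nf
    have e4 : Real.exp (-lam₀ * t / 2) ^ 2 = Real.exp (-lam₀ * t) := by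
      rw [pow_two, ← Real.exp_add]; ring_nf
    have expand : R ^ 2 = r ^ 2 * Real.exp (C * p₂ / (p₁ * a)) ^ 2
        * Real.exp (-lam₀ * t / 2) ^ 2 * Real.sqrt (δ 0 ⬝ᵥ δ 0) ^ 2 := by
      rw [hR_def]; ring
    rw [expand, hr_sq, e2, e3, e4]
  have hexpk : Real.exp (k / a) ≤ Real.exp (2 * (C * p₂ / (p₁ * a))) := by
    apply Real.exp_le_exp.2
    have hrle : r ≤ p₂ / p₁ := by
      have h1 : (1:ℝ) ≤ p₂ / p₁ := (one_le_div hp₁).2 hp₁₂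
      nlinarith [hr_sq, hr_nonneg, sq_nonneg (r - 1)]
    rw [hk_def, div_le_iff₀ ha]
    have heq : 2 * (C * p₂ / (p₁ * a)) * a = 2 * C * (p₂ / p₁) := by
      field_simp
    rw [heq]
    nlinarith [hrle, hC]
  have hmain : δ t ⬝ᵥ δ t ≤ R ^ 2 := by
    have s1 : V 0 * Real.exp (k / a) ≤ p₂ * (δ 0 ⬝ᵥ δ 0) * Real.exp (2 * (C * p₂ / (p₁ * a))) :=
      mul_le_mul hV0le hexpk (le_of_lt (Real.exp_pos _))
        (mul_nonneg (le_of_lt (lt_of_lt_of_le hp₁ hp₁₂)) hd0)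
    have s2 : V t ≤ p₂ * (δ 0 ⬝ᵥ δ 0) * Real.exp (2 * (C * p₂ / (p₁ * a)))
        * Real.exp (-lam₀ * t) :=
      le_trans hVt (mul_le_mul_of_nonneg_right s1 (le_of_lt (Real.exp_pos _)))
    rw [hRsq]
    have heq2 : (p₂ / p₁) * Real.exp (2 * (C * p₂ / (p₁ * a))) * Real.exp (-lam₀ * t)
        * (δ 0 ⬝ᵥ δ 0)
        = (p₂ * (δ 0 ⬝ᵥ δ 0) * Real.exp (2 * (C * p₂ / (p₁ * a))) * Real.exp (-lam₀ * t)) / p₁ := by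
      field_simp
    rw [heq2, le_div_iff₀ hp₁]
    nlinarith [hδt, s2]
  calc Real.sqrt (δ t ⬝ᵥ δ t) ≤ Real.sqrt (R ^ 2) := Real.sqrt_le_sqrt hmain
    _ = R := Real.sqrt_sq hRnn
end
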